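/- arXiv:2508.18394 — 3 statements merged into one kernel-verified Lean document; each statement's English description precedes it below -/
import Mathlib

section
/- There is an absolute constant c > 0 such that the following holds. Let x ≥ 1, let f : ℕ → ℂ be supported on the integers in [1, x], let α be real, let 1 ≤ y ≤ x and 1 ≤ Q ≤ x^(1/2). Define F(x; β) := Σ_{n ≤ x} f(n) e(βn), F(n, n+y; α) := Σ_{n < m ≤ n+y} f(m) e(αm), and let 𝒜(Q, y) be the set of rationals a/q with 1 ≤ q ≤ Q, gcd(a, q) = 1 and |α − a/q| ≤ 1/(6y). Then Σ_{−y < n ≤ x} |F(n, n+y; α)|² ≥ c · (y²/x) · Σ_{a/q ∈ 𝒜(Q, y)} |F(x; a/q)|², where the left-hand sum is over integers n. -/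
open Finset

/-- `e(β) = exp(2πiβ)`. -/
noncomputable def e (β : ℝ) : ℂ := Complex.exp (2 * Real.pi * Complex.I * β)

lemma e_eq (t : ℝ) : e t = Complex.exp ((2 * Real.pi * t : ℝ) * Complex.I) := by
  unfold e; push_cast; ring_nf

lemma e_zero : e 0 = 1 := by
  unfold e; norm_num

lemma e_add (s t : ℝ) : e (s + t) = e s * e t := by
  unfold e; rw [← Complex.exp_add]; push_cast; ring_nf

lemma e_re (t : ℝ) : (e t).re = Real.cos (2 * Real.pi * t) := by
  rw [e_eq]; exact Complex.exp_ofReal_mul_I_re _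

lemma norm_e (t : ℝ) : ‖e t‖ = 1 := by
  rw [e_eq, Complex.norm_exp_ofReal_mul_I]

lemma conj_e (t : ℝ) : (starRingEnd ℂ) (e t) = e (-t) := by
  rw [e_eq, e_eq, ← Complex.exp_conj]
  congr 1
  rw [map_mul, Complex.conj_I, Complex.conj_ofReal]
  push_cast
  ring

lemma e_pow (t : ℝ) (n : ℕ) : e t ^ n = e (t * n) := by
  rw [e_eq, e_eq, ← Complex.exp_nat_mul]
  congr 1
  push_cast
  ring

lemma sum_inv_sq_Icc : ∀ n : ℕ, 1 ≤ n → ∑ j ∈ Finset.Icc 1 n, (1 : ℝ) / (j:ℝ)^2 ≤ 2 - 1/n := by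
  intro n hn
  induction n with
  | zero => omega
  | succ n ih =>
    rcases Nat.eq_or_lt_of_le hn with h1 | h2
    · simp [← h1]; norm_num
    · have hn1 : 1 ≤ n := by omega
      rw [Finset.sum_Icc_succ_top (by omega : 1 ≤ n + 1)]
      have h3 := ih hn1
      have hnp : (0:ℝ) < n := by positivity
      have hnp1 : (0:ℝ) < (n:ℝ) + 1 := by positivity
      have key : (1:ℝ)/((n:ℝ)+1)^2 ≤ 1/(n:ℝ) - 1/((n:ℝ)+1) := by
        rw [div_sub_div _ _ (ne_of_gt hnp) (ne_of_gt hnp1)]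
        rw [div_le_div_iff₀ (by positivity) (by positivity)]
        ring_nf
        nlinarith
      push_cast
      linarith

lemma sum_inv_sq_nat (t : Finset ℕ) (h0 : 0 ∉ t) : ∑ j ∈ t, (1 : ℝ) / (j:ℝ)^2 ≤ 2 := by
  rcases t.eq_empty_or_nonempty with rfl | ht
  · simp
  have hsub : t ⊆ Finset.Icc 1 (t.sup id) := by
    intro j hj
    simp only [Finset.mem_Icc]
    exact ⟨Nat.one_le_iff_ne_zero.2 (fun h => h0 (h ▸ hj)), Finset.le_sup (f := id) hj⟩
  have h1 : 1 ≤ t.sup id := by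
    obtain ⟨j, hj⟩ := ht
    exact le_trans (Nat.one_le_iff_ne_zero.2 (fun h => h0 (h ▸ hj))) (Finset.le_sup (f := id) hj)
  calc ∑ j ∈ t, (1 : ℝ) / (j:ℝ)^2 ≤ ∑ j ∈ Finset.Icc 1 (t.sup id), (1 : ℝ) / (j:ℝ)^2 :=
        Finset.sum_le_sum_of_subset_of_nonneg hsub (by intros; positivity)
    _ ≤ 2 - 1/(t.sup id) := sum_inv_sq_Icc _ h1
    _ ≤ 2 := by
        have : (0:ℝ) ≤ 1/(t.sup id) := by positivity
        linarith

lemma sum_inv_sq_int (s : Finset ℤ) (h0 : (0:ℤ) ∉ s) : ∑ j ∈ s, (1 : ℝ) / (j:ℝ)^2 ≤ 4 := by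
  rw [← Finset.sum_filter_add_sum_filter_not s (fun j => 0 < j)]
  have hpos : ∑ j ∈ s.filter (fun j => 0 < j), (1 : ℝ) / (j:ℝ)^2 ≤ 2 := by
    rw [show ∑ j ∈ s.filter (fun j => 0 < j), (1 : ℝ) / (j:ℝ)^2
        = ∑ j ∈ s.filter (fun j => 0 < j), (1 : ℝ) / ((j.toNat : ℝ))^2 by
      apply Finset.sum_congr rfl; intro j hj
      rw [Finset.mem_filter] at hj
      have : ((j.toNat : ℕ) : ℝ) = (j : ℝ) := by
        exact_mod_cast congrArg (fun z : ℤ => (z : ℝ)) (Int.toNat_of_nonneg (le_of_lt hj.2))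
      rw [this]]
    rw [← Finset.sum_image (g := Int.toNat)
      (f := fun m : ℕ => (1 : ℝ) / ((m : ℝ))^2) ?_]
    · apply sum_inv_sq_nat
      simp only [Finset.mem_image, Finset.mem_filter]
      rintro ⟨j, ⟨hjs, hjpos⟩, hj0⟩
      omega
    · intro a ha b hb hab
      rw [Finset.mem_coe, Finset.mem_filter] at ha hb
      omega
  have hneg : ∑ j ∈ s.filter (fun j => ¬ 0 < j), (1 : ℝ) / (j:ℝ)^2 ≤ 2 := by
    rw [show ∑ j ∈ s.filter (fun j => ¬ 0 < j), (1 : ℝ) / (j:ℝ)^2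
        = ∑ j ∈ s.filter (fun j => ¬ 0 < j), (1 : ℝ) / (((-j).toNat : ℝ))^2 by
      apply Finset.sum_congr rfl; intro j hj
      rw [Finset.mem_filter] at hj
      have hj0 : j ≠ 0 := fun h => h0 (h ▸ hj.1)
      have h1 : (((-j).toNat : ℕ) : ℝ) = -(j : ℝ) := by
        have h2 : (((-j).toNat : ℕ) : ℤ) = -j := Int.toNat_of_nonneg (by omega)
        exact_mod_cast congrArg (fun z : ℤ => (z : ℝ)) h2
      rw [h1, neg_sq]]
    rw [← Finset.sum_image (g := fun j : ℤ => (-j).toNat)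
      (f := fun m : ℕ => (1 : ℝ) / ((m : ℝ))^2) ?_]
    · apply sum_inv_sq_nat
      simp only [Finset.mem_image, Finset.mem_filter]
      rintro ⟨j, ⟨hjs, hjpos⟩, hj0⟩
      have : j ≠ 0 := fun h => h0 (h ▸ hjs)
      omega
    · intro a ha b hb hab
      rw [Finset.mem_coe, Finset.mem_filter] at ha hb
      have ha0 : a ≠ 0 := fun h => h0 (h ▸ ha.1)
      have hb0 : b ≠ 0 := fun h => h0 (h ▸ hb.1)
      have hab' : (-a).toNat = (-b).toNat := hab
      omega
  linarith

lemma norm_e_sub_one_aux {φ : ℝ} (h0 : 0 ≤ φ) (h : φ ≤ 1/2) : 4 * φ ≤ ‖e φ - 1‖ := by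
  have hpi := Real.pi_pos
  have hre : (e φ - 1).re = Real.cos (2*Real.pi*φ) - 1 := by
    simp [Complex.sub_re, e_re]
  have him : (e φ - 1).im = Real.sin (2*Real.pi*φ) := by
    have : (e φ).im = Real.sin (2*Real.pi*φ) := by
      rw [e_eq]; exact Complex.exp_ofReal_mul_I_im _
    simp [Complex.sub_im, this]
  have hsq : ‖e φ - 1‖^2 = 2 - 2*Real.cos (2*Real.pi*φ) := by
    rw [Complex.sq_norm, Complex.normSq_apply, hre, him]
    have := Real.sin_sq_add_cos_sq (2*Real.pi*φ)
    nlinarith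
  have hcs : Real.cos (Real.pi*φ)^2 = 1/2 + Real.cos (2*(Real.pi*φ))/2 := Real.cos_sq _
  have hss := Real.sin_sq_add_cos_sq (Real.pi*φ)
  have h2 : ‖e φ - 1‖^2 = 4 * Real.sin (Real.pi*φ)^2 := by
    rw [hsq]
    have : 2*Real.pi*φ = 2*(Real.pi*φ) := by ring
    rw [this]
    nlinarith
  have hj : 2*φ ≤ Real.sin (Real.pi*φ) := by
    have := Real.mul_le_sin (x := Real.pi*φ) (by positivity) (by nlinarith)
    have hne : Real.pi ≠ 0 := ne_of_gt hpi
    calc 2*φ = 2/Real.pi * (Real.pi*φ) := by field_simp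
      _ ≤ Real.sin (Real.pi*φ) := this
  have hn : 0 ≤ ‖e φ - 1‖ := norm_nonneg _
  nlinarith

lemma norm_e_sub_one {φ : ℝ} (h : |φ| ≤ 1/2) : 4 * |φ| ≤ ‖e φ - 1‖ := by
  rcases le_or_gt 0 φ with h0 | h0
  · rw [abs_of_nonneg h0] at *
    exact norm_e_sub_one_aux h0 h
  · rw [abs_of_neg h0] at *
    have := norm_e_sub_one_aux (le_of_lt (by linarith : (0:ℝ) < -φ)) h
    have hc : ‖e (-φ) - 1‖ = ‖e φ - 1‖ := by
      rw [← conj_e]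
      rw [show (starRingEnd ℂ) (e φ) - 1 = (starRingEnd ℂ) (e φ - 1) by rw [map_sub, map_one]]
      exact RCLike.norm_conj _
    linarith [hc ▸ this]

lemma norm_geom_sum_le {φ : ℝ} (hne : φ ≠ 0) (hle : |φ| ≤ 1/2) (A B : ℤ) :
    ‖∑ u ∈ Finset.Icc A B, e (φ * u)‖ ≤ 1 / (2 * |φ|) := by
  have habs : 0 < |φ| := abs_pos.2 hne
  rcases le_or_gt B A with hBA | hAB
  · rcases eq_or_lt_of_le hBA with rfl | hlt
    · rw [Finset.Icc_self, Finset.sum_singleton]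
      rw [norm_e]
      rw [le_div_iff₀ (by positivity)]
      nlinarith
    · rw [Finset.Icc_eq_empty (by omega), Finset.sum_empty, norm_zero]
      positivity
  · -- reindex to range
    set L : ℕ := (B - A + 1).toNat with hL
    have hsum : ∑ u ∈ Finset.Icc A B, e (φ * u) = e (φ * A) * ∑ j ∈ Finset.range L, (e φ)^j := by
      rw [Finset.mul_sum]
      apply Finset.sum_nbij' (i := fun u => (u - A).toNat) (j := fun j : ℕ => A + j)
      · intro u hu; simp only [Finset.mem_Icc] at hu; simp only [Finset.mem_range]; omega
      · intro j hj; simp only [Finset.mem_range] at hj; simp only [Finset.mem_Icc]; omega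
      · intro u hu; simp only [Finset.mem_Icc] at hu; omega
      · intro j hj; simp only [Finset.mem_range] at hj; omega
      · intro u hu
        simp only [Finset.mem_Icc] at hu
        rw [e_pow, ← e_add]
        congr 1
        have : (((u - A).toNat : ℕ) : ℝ) = (u : ℝ) - A := by
          have h2 : (((u - A).toNat : ℕ) : ℤ) = u - A := Int.toNat_of_nonneg (by omega)
          exact_mod_cast congrArg (fun z : ℤ => (z : ℝ)) h2
        rw [this]; ring
    have hone : e φ ≠ 1 := by
      intro h
      have := norm_e_sub_one hle
      rw [h, sub_self, norm_zero] at this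
      nlinarith
    rw [hsum, geom_sum_eq hone]
    rw [norm_mul, norm_e, one_mul, norm_div]
    have hnum : ‖(e φ)^L - 1‖ ≤ 2 := by
      calc ‖(e φ)^L - 1‖ ≤ ‖(e φ)^L‖ + ‖(1:ℂ)‖ := norm_sub_le _ _
        _ = 2 := by rw [norm_pow, norm_e]; norm_num
    have hden := norm_e_sub_one hle
    rw [div_le_div_iff₀ (by nlinarith [norm_nonneg (e φ - 1)]) (by positivity)]
    calc ‖(e φ)^L - 1‖ * (2*|φ|) ≤ 2 * (2*|φ|) := by nlinarith
      _ ≤ 1 * ‖e φ - 1‖ := by nlinarith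

lemma sep_sum_inv_sq {ι : Type*} [DecidableEq ι] (P : Finset ι) (θ : ι → ℝ) (δ : ℝ) (hδ : 0 < δ)
    (hsep : ∀ p ∈ P, ∀ p' ∈ P, p ≠ p' → δ ≤ |θ p - θ p'|) {p : ι} (hp : p ∈ P) :
    ∑ p' ∈ P.erase p, 1 / (θ p - θ p') ^ 2 ≤ 16 / δ ^ 2 := by
  classical
  set j : ι → ℤ := fun p' => ⌊(θ p' - θ p) / δ⌋ with hjdef
  have hsep' : ∀ p' ∈ P.erase p, δ ≤ |θ p - θ p'| := fun p' hp' =>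
    hsep p hp p' (Finset.mem_of_mem_erase hp')
      (fun h => (Finset.ne_of_mem_erase hp') h.symm)
  have hs_bounds : ∀ p' ∈ P.erase p, (j p' ≠ 0) ∧
      ((j p' : ℝ))^2 ≤ 4 * ((θ p' - θ p)/δ)^2 := by
    intro p' hp'
    have hjp : j p' = ⌊(θ p' - θ p)/δ⌋ := rfl
    set s : ℝ := (θ p' - θ p)/δ with hs
    have habs : δ ≤ |θ p - θ p'| := hsep' p' hp'
    have h1 : 1 ≤ |s| := by
      rw [hs, abs_div, abs_of_pos hδ]
      rw [le_div_iff₀ hδ]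
      rw [abs_sub_comm]
      linarith
    have hfl : (⌊s⌋ : ℝ) ≤ s := Int.floor_le s
    have hfg : s - 1 < ⌊s⌋ := Int.sub_one_lt_floor s
    rcases le_or_gt 1 s with hpos | hneg
    · have hj1 : (1:ℤ) ≤ ⌊s⌋ := by exact_mod_cast Int.le_floor.2 (by exact_mod_cast hpos)
      refine ⟨by rw [hjp]; omega, ?_⟩
      rw [hjp]
      have : (⌊s⌋:ℝ) ≥ 1 := by exact_mod_cast hj1
      nlinarith
    · have hsneg : s ≤ -1 := by
        cases' (abs_cases s) with hc hc
        · nlinarith [hc.1, hc.2, h1]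
        · nlinarith [hc.1, hc.2, h1]
      have hj1 : ⌊s⌋ ≤ -1 := by
        have : (⌊s⌋:ℝ) ≤ -1 := le_trans hfl hsneg
        exact_mod_cast this
      refine ⟨by rw [hjp]; omega, ?_⟩
      rw [hjp]
      have h2s : 2*s ≤ (⌊s⌋:ℝ) := by linarith
      have hjneg : (⌊s⌋:ℝ) < 0 := by
        have : (⌊s⌋:ℝ) ≤ -1 := by exact_mod_cast hj1
        linarith
      nlinarith
  have hinj : ∀ a ∈ P.erase p, ∀ b ∈ P.erase p, j a = j b → a = b := by
    intro a ha b hb hab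
    by_contra hne
    have hsepab : δ ≤ |θ a - θ b| :=
      hsep a (Finset.mem_of_mem_erase ha) b (Finset.mem_of_mem_erase hb) hne
    have h2 := Int.abs_sub_lt_one_of_floor_eq_floor (R := ℝ) hab
    have hd : |(θ a - θ p)/δ - (θ b - θ p)/δ| = |θ a - θ b| / δ := by
      rw [div_sub_div_same, abs_div, abs_of_pos hδ]
      congr 2
      ring
    rw [hd] at h2
    rw [div_lt_iff₀ hδ, one_mul] at h2
    linarith
  have hptwise : ∀ p' ∈ P.erase p,
      1 / (θ p - θ p') ^ 2 ≤ (4/δ^2) * (1 / ((j p' : ℝ))^2) := by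
    intro p' hp'
    obtain ⟨hj0, hj2⟩ := hs_bounds p' hp'
    have hjr : (0:ℝ) < ((j p' : ℝ))^2 := by
      have : (j p' : ℝ) ≠ 0 := by exact_mod_cast hj0
      positivity
    have habs : δ ≤ |θ p - θ p'| := hsep' p' hp'
    have hd2 : (0:ℝ) < (θ p - θ p')^2 := by
      have h3 : 0 < |θ p - θ p'| := lt_of_lt_of_le hδ habs
      nlinarith [sq_abs (θ p - θ p')]
    have hrw : (4:ℝ)/δ^2 * (1/((j p':ℝ))^2) = 4/(δ^2 * ((j p':ℝ))^2) := by
      field_simp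
    rw [hrw, div_le_div_iff₀ hd2 (by positivity)]
    have hexp : ((θ p' - θ p)/δ)^2 * δ^2 = (θ p - θ p')^2 := by
      field_simp
      ring
    nlinarith [hj2, sq_nonneg δ]
  have h0img : (0:ℤ) ∉ (P.erase p).image j := by
    simp only [Finset.mem_image]
    rintro ⟨p', hp', h0⟩
    exact (hs_bounds p' hp').1 h0
  calc ∑ p' ∈ P.erase p, 1 / (θ p - θ p') ^ 2
      ≤ ∑ p' ∈ P.erase p, (4/δ^2) * (1 / ((j p' : ℝ))^2) := Finset.sum_le_sum hptwise
    _ = (4/δ^2) * ∑ p' ∈ P.erase p, (1 / ((j p' : ℝ))^2) := by rw [Finset.mul_sum]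
    _ = (4/δ^2) * ∑ m ∈ (P.erase p).image j, (1 / ((m : ℝ))^2) := by
        rw [Finset.sum_image hinj]
    _ ≤ (4/δ^2) * 4 := by
        apply mul_le_mul_of_nonneg_left (sum_inv_sq_int _ h0img) (by positivity)
    _ = 16/δ^2 := by ring

lemma large_sieve {ι : Type*} [DecidableEq ι] (P : Finset ι) (θ : ι → ℝ) (δ : ℝ) (hδ : 0 < δ)
    (hbound : ∀ p ∈ P, |θ p| ≤ 1/6)
    (hsep : ∀ p ∈ P, ∀ p' ∈ P, p ≠ p' → δ ≤ |θ p - θ p'|)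
    (A B : ℤ) (hA : A ≤ -1) (hB : 1 ≤ B) (T : ℤ → ℂ) :
    ∑ p ∈ P, ‖∑ n ∈ Finset.Ioc A B, T n * e (θ p * n)‖^2
      ≤ ((4*((B:ℝ)-A)^2 + 4/δ^2)/((B:ℝ)-A+1)) * ∑ n ∈ Finset.Ioc A B, ‖T n‖^2 := by
  classical
  set m : ℤ := B - A with hm
  have hm1 : 1 ≤ m := by omega
  set mr : ℝ := (B:ℝ) - A with hmr
  have hmr1 : (1:ℝ) ≤ mr := by rw [hmr]; push_cast; exact_mod_cast (by push_cast; exact_mod_cast hm1 : (1:ℝ) ≤ (B:ℝ) - A)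
  set S : ι → ℂ := fun p => ∑ n ∈ Finset.Ioc A B, T n * e (θ p * n) with hS
  set c : ι → ℂ := fun p => (starRingEnd ℂ) (S p) with hc
  set U : ℤ → ℂ := fun n => ∑ p ∈ P, c p * e (θ p * n) with hU
  set X : ℝ := ∑ p ∈ P, ‖S p‖^2 with hX
  have hX0 : 0 ≤ X := Finset.sum_nonneg (fun p _ => by positivity)
  have hTU0 : (0:ℝ) ≤ ∑ n ∈ Finset.Ioc A B, ‖T n‖^2 := Finset.sum_nonneg (fun n _ => by positivity)
  -- Step A : X = Re (∑ n, T n * U n)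
  have stepA : X = (∑ n ∈ Finset.Ioc A B, T n * U n).re := by
    have h1 : ∀ p : ι, ‖S p‖^2 = (c p * S p).re := by
      intro p
      rw [hc, mul_comm, Complex.mul_conj, Complex.ofReal_re,
        Complex.normSq_eq_norm_sq]
    have h2 : (∑ p ∈ P, c p * S p) = ∑ n ∈ Finset.Ioc A B, T n * U n := by
      simp only [hS, hU, Finset.mul_sum]
      rw [Finset.sum_comm]
      apply Finset.sum_congr rfl
      intro n _
      apply Finset.sum_congr rfl
      intro p _
      ring
    rw [hX, ← h2, Complex.re_sum]
    exact Finset.sum_congr rfl (fun p _ => h1 p)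
  -- Step B : X^2 ≤ (∑ ‖T‖²) * (∑_{I} ‖U‖²)
  have stepB : X^2 ≤ (∑ n ∈ Finset.Ioc A B, ‖T n‖^2) * (∑ n ∈ Finset.Ioc A B, ‖U n‖^2) := by
    have h1 : X ≤ ∑ n ∈ Finset.Ioc A B, ‖T n‖ * ‖U n‖ := by
      rw [stepA]
      calc (∑ n ∈ Finset.Ioc A B, T n * U n).re ≤ ‖∑ n ∈ Finset.Ioc A B, T n * U n‖ :=
            Complex.re_le_norm _
        _ ≤ ∑ n ∈ Finset.Ioc A B, ‖T n * U n‖ := norm_sum_le _ _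
        _ = ∑ n ∈ Finset.Ioc A B, ‖T n‖ * ‖U n‖ := by
            exact Finset.sum_congr rfl (fun n _ => norm_mul _ _)
    have h2 := Finset.sum_mul_sq_le_sq_mul_sq (Finset.Ioc A B) (fun n => ‖T n‖) (fun n => ‖U n‖)
    have h3 : (0:ℝ) ≤ ∑ n ∈ Finset.Ioc A B, ‖T n‖ * ‖U n‖ :=
      Finset.sum_nonneg (fun n _ => by positivity)
    calc X^2 ≤ (∑ n ∈ Finset.Ioc A B, ‖T n‖ * ‖U n‖)^2 := by nlinarith
      _ ≤ (∑ n ∈ Finset.Ioc A B, ‖T n‖^2) * (∑ n ∈ Finset.Ioc A B, ‖U n‖^2) := h2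
  -- Step C : averaging over shifts
  set K : Finset ℤ := Finset.Icc (A+1) (B+m) with hK
  set W : ℝ := ∑ v ∈ K, ∑ u ∈ K, ‖U (u - v)‖^2 with hW
  have stepC : (mr+1) * (∑ n ∈ Finset.Ioc A B, ‖U n‖^2) ≤ W := by
    have hshift : ∀ v ∈ Finset.Icc (0:ℤ) m,
        (∑ n ∈ Finset.Ioc A B, ‖U n‖^2) ≤ ∑ u ∈ K, ‖U (u - v)‖^2 := by
      intro v hv
      rw [Finset.mem_Icc] at hv
      have hre : ∑ u ∈ K, ‖U (u - v)‖^2 = ∑ w ∈ Finset.Icc (A+1-v) (B+m-v), ‖U w‖^2 := by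
        apply Finset.sum_nbij' (i := fun u => u - v) (j := fun w => w + v)
        · intro u hu; rw [hK, Finset.mem_Icc] at hu; rw [Finset.mem_Icc]; omega
        · intro w hw; rw [Finset.mem_Icc] at hw; rw [hK, Finset.mem_Icc]; omega
        · intro u _; omega
        · intro w _; omega
        · intro u _; rfl
      rw [hre]
      apply Finset.sum_le_sum_of_subset_of_nonneg
      · intro n hn; rw [Finset.mem_Ioc] at hn; rw [Finset.mem_Icc]; omega
      · intros; positivity
    have hcard0m : ((Finset.Icc (0:ℤ) m).card : ℝ) = mr + 1 := by
      rw [Int.card_Icc]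
      have h1 : (m + 1 - 0 : ℤ).toNat = (m+1).toNat := by norm_num
      rw [h1]
      have h2 : ((m+1).toNat : ℤ) = m + 1 := Int.toNat_of_nonneg (by omega)
      have h3 : (((m+1).toNat : ℕ) : ℝ) = ((m:ℝ) + 1) := by exact_mod_cast congrArg (fun z : ℤ => (z:ℝ)) h2
      rw [h3, hm, hmr]; push_cast; ring
    have hsub0m : Finset.Icc (0:ℤ) m ⊆ K := by
      intro v hv; rw [Finset.mem_Icc] at hv; rw [hK, Finset.mem_Icc]; omega
    calc (mr+1) * (∑ n ∈ Finset.Ioc A B, ‖U n‖^2)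
        = ∑ _v ∈ Finset.Icc (0:ℤ) m, (∑ n ∈ Finset.Ioc A B, ‖U n‖^2) := by
          rw [Finset.sum_const, nsmul_eq_mul, hcard0m]
      _ ≤ ∑ v ∈ Finset.Icc (0:ℤ) m, ∑ u ∈ K, ‖U (u - v)‖^2 := Finset.sum_le_sum hshift
      _ ≤ W := by
          rw [hW]
          apply Finset.sum_le_sum_of_subset_of_nonneg hsub0m
          intros; apply Finset.sum_nonneg; intros; positivity
  -- Step D : expansion of W as a double sum over P
  set E : ι → ι → ℂ := fun p p' => ∑ u ∈ K, e ((θ p - θ p') * u) with hE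
  have hUsplit : ∀ u v : ℤ, U (u - v)
      = ∑ p ∈ P, c p * (e (θ p * u) * (starRingEnd ℂ) (e (θ p * v))) := by
    intro u v
    rw [hU]
    apply Finset.sum_congr rfl
    intro p _
    rw [conj_e]
    rw [show e (θ p * u) * e (-(θ p * v)) = e (θ p * u + -(θ p * v)) from (e_add _ _).symm]
    congr 1
    push_cast
    ring
  have comm3 : ∀ (g : ι → ℤ → ℤ → ℂ),
      ∑ v ∈ K, ∑ u ∈ K, ∑ p ∈ P, g p u v = ∑ p ∈ P, ∑ v ∈ K, ∑ u ∈ K, g p u v := by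
    intro g
    calc ∑ v ∈ K, ∑ u ∈ K, ∑ p ∈ P, g p u v
        = ∑ v ∈ K, ∑ p ∈ P, ∑ u ∈ K, g p u v :=
          Finset.sum_congr rfl (fun v _ => Finset.sum_comm)
      _ = ∑ p ∈ P, ∑ v ∈ K, ∑ u ∈ K, g p u v := Finset.sum_comm
  have key : ∀ (p p' : ι) (u v : ℤ),
      (c p * (e (θ p * u) * (starRingEnd ℂ) (e (θ p * v)))) *
        (starRingEnd ℂ) (c p' * (e (θ p' * u) * (starRingEnd ℂ) (e (θ p' * v))))
      = (c p * (starRingEnd ℂ) (c p')) *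
          (e ((θ p - θ p') * u) * (starRingEnd ℂ) (e ((θ p - θ p') * v))) := by
    intro p p' u v
    have h1 : e ((θ p - θ p') * u) = e (θ p * u) * (starRingEnd ℂ) (e (θ p' * u)) := by
      rw [conj_e]
      rw [show e (θ p * u) * e (-(θ p' * u)) = e (θ p * u + -(θ p' * u)) from (e_add _ _).symm]
      congr 1
      ring
    have h2 : (starRingEnd ℂ) (e ((θ p - θ p') * v))
        = (starRingEnd ℂ) (e (θ p * v)) * e (θ p' * v) := by
      rw [conj_e, conj_e]
      rw [show e (-(θ p * v)) * e (θ p' * v) = e (-(θ p * v) + θ p' * v) from (e_add _ _).symm]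
      congr 1
      ring
    rw [h1, h2]
    simp only [map_mul, Complex.conj_conj]
    ring
  have stepDc : ∑ v ∈ K, ∑ u ∈ K, U (u - v) * (starRingEnd ℂ) (U (u - v))
      = ∑ p ∈ P, ∑ p' ∈ P,
          (c p * (starRingEnd ℂ) (c p')) * (E p p' * (starRingEnd ℂ) (E p p')) := by
    have lhs1 : ∀ v ∈ K, ∀ u ∈ K, U (u - v) * (starRingEnd ℂ) (U (u - v))
        = ∑ p ∈ P, ∑ p' ∈ P, (c p * (starRingEnd ℂ) (c p')) *
            (e ((θ p - θ p') * u) * (starRingEnd ℂ) (e ((θ p - θ p') * v))) := by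
      intro v _ u _
      rw [hUsplit u v, map_sum, Finset.sum_mul_sum]
      apply Finset.sum_congr rfl
      intro p _
      apply Finset.sum_congr rfl
      intro p' _
      exact key p p' u v
    calc ∑ v ∈ K, ∑ u ∈ K, U (u - v) * (starRingEnd ℂ) (U (u - v))
        = ∑ v ∈ K, ∑ u ∈ K, ∑ p ∈ P, ∑ p' ∈ P, (c p * (starRingEnd ℂ) (c p')) *
            (e ((θ p - θ p') * u) * (starRingEnd ℂ) (e ((θ p - θ p') * v))) := by
          apply Finset.sum_congr rfl; intro v hv
          apply Finset.sum_congr rfl; intro u hu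
          exact lhs1 v hv u hu
      _ = ∑ p ∈ P, ∑ v ∈ K, ∑ u ∈ K, ∑ p' ∈ P, (c p * (starRingEnd ℂ) (c p')) *
            (e ((θ p - θ p') * u) * (starRingEnd ℂ) (e ((θ p - θ p') * v))) := comm3 _
      _ = ∑ p ∈ P, ∑ p' ∈ P, ∑ v ∈ K, ∑ u ∈ K, (c p * (starRingEnd ℂ) (c p')) *
            (e ((θ p - θ p') * u) * (starRingEnd ℂ) (e ((θ p - θ p') * v))) := by
          apply Finset.sum_congr rfl; intro p _
          exact comm3 _
      _ = ∑ p ∈ P, ∑ p' ∈ P,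
          (c p * (starRingEnd ℂ) (c p')) * (E p p' * (starRingEnd ℂ) (E p p')) := by
          apply Finset.sum_congr rfl; intro p _
          apply Finset.sum_congr rfl; intro p' _
          have hEc : E p p' * (starRingEnd ℂ) (E p p')
              = ∑ v ∈ K, ∑ u ∈ K,
                  e ((θ p - θ p') * u) * (starRingEnd ℂ) (e ((θ p - θ p') * v)) := by
            rw [hE, map_sum, Finset.sum_mul_sum]
            exact Finset.sum_comm
          rw [hEc]
          simp only [Finset.mul_sum]
  have hWre : W = (∑ p ∈ P, ∑ p' ∈ P,
      (c p * (starRingEnd ℂ) (c p')) * (E p p' * (starRingEnd ℂ) (E p p'))).re := by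
    rw [← stepDc, hW, Complex.re_sum]
    apply Finset.sum_congr rfl; intro v _
    rw [Complex.re_sum]
    apply Finset.sum_congr rfl; intro u _
    rw [Complex.mul_conj, Complex.ofReal_re, Complex.normSq_eq_norm_sq]
  -- Step E : bounding the double sum
  have hEsym : ∀ p p', ‖E p p'‖ = ‖E p' p‖ := by
    intro p p'
    have h1 : E p' p = (starRingEnd ℂ) (E p p') := by
      rw [hE, map_sum]
      apply Finset.sum_congr rfl; intro u _
      rw [conj_e]
      congr 1
      ring
    rw [h1, RCLike.norm_conj]
  have hcardK : ((K.card : ℕ) : ℝ) = 2*mr := by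
    rw [hK, Int.card_Icc]
    have h1 : (B + m + 1 - (A+1) : ℤ) = 2*m := by omega
    rw [h1]
    have h2 : (((2*m).toNat : ℕ) : ℤ) = 2*m := Int.toNat_of_nonneg (by omega)
    have h3 : (((2*m).toNat : ℕ) : ℝ) = ((2*m : ℤ) : ℝ) := by exact_mod_cast congrArg (fun z : ℤ => (z:ℝ)) h2
    rw [h3, hm, hmr]
    push_cast
    ring
  have hEdiag : ∀ p, ‖E p p‖^2 = 4*mr^2 := by
    intro p
    have h1 : E p p = ((K.card : ℕ) : ℂ) := by
      rw [hE]
      simp only [sub_self, zero_mul, e_zero]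
      rw [Finset.sum_const, nsmul_eq_mul, mul_one]
    rw [h1, Complex.norm_natCast, hcardK]
    ring
  have hEoff : ∀ p ∈ P, ∀ p' ∈ P, p ≠ p' → ‖E p p'‖^2 ≤ (1/4) * (1/(θ p - θ p')^2) := by
    intro p hp p' hp' hne
    have hsp := hsep p hp p' hp' hne
    have hφne : θ p - θ p' ≠ 0 := by
      intro h
      rw [h, abs_zero] at hsp
      linarith
    have hφle : |θ p - θ p'| ≤ 1/2 := by
      have h1 := hbound p hp
      have h2 := hbound p' hp'
      calc |θ p - θ p'| ≤ |θ p| + |θ p'| := by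
            rw [sub_eq_add_neg]
            calc |θ p + -θ p'| ≤ |θ p| + |-θ p'| := abs_add_le _ _
              _ = |θ p| + |θ p'| := by rw [abs_neg]
        _ ≤ 1/2 := by linarith
    have hgeo : ‖E p p'‖ ≤ 1 / (2 * |θ p - θ p'|) := by
      rw [hE]
      exact norm_geom_sum_le hφne hφle (A+1) (B+m)
    have habs : (0:ℝ) < |θ p - θ p'| := abs_pos.2 hφne
    have hsq : (1 / (2 * |θ p - θ p'|))^2 = (1/4) * (1/(θ p - θ p')^2) := by
      rw [div_pow, mul_pow, sq_abs]
      have h4 : (θ p - θ p')^2 ≠ 0 := pow_ne_zero _ hφne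
      field_simp
      ring
    calc ‖E p p'‖^2 ≤ (1 / (2 * |θ p - θ p'|))^2 := by
          apply pow_le_pow_left₀ (norm_nonneg _) hgeo
      _ = (1/4) * (1/(θ p - θ p')^2) := hsq
  have hrow : ∀ p ∈ P, ∑ p' ∈ P, ‖E p p'‖^2 ≤ 4*mr^2 + 4/δ^2 := by
    intro p hp
    have hsplit := Finset.add_sum_erase P (fun p' => ‖E p p'‖^2) hp
    have herase : ∑ p' ∈ P.erase p, ‖E p p'‖^2 ≤ 4/δ^2 := by
      calc ∑ p' ∈ P.erase p, ‖E p p'‖^2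
          ≤ ∑ p' ∈ P.erase p, (1/4) * (1/(θ p - θ p')^2) := by
            apply Finset.sum_le_sum
            intro p' hp'
            exact hEoff p hp p' (Finset.mem_of_mem_erase hp')
              (fun h => (Finset.ne_of_mem_erase hp') h.symm)
        _ = (1/4) * ∑ p' ∈ P.erase p, 1/(θ p - θ p')^2 := by rw [Finset.mul_sum]
        _ ≤ (1/4) * (16/δ^2) := by
            apply mul_le_mul_of_nonneg_left _ (by norm_num)
            exact sep_sum_inv_sq P θ δ hδ hsep hp
        _ = 4/δ^2 := by ring
    have hd := hEdiag p
    rw [← hsplit]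
    beta_reduce
    exact add_le_add (le_of_eq hd) herase
  have hnormc : ∀ p, ‖c p‖ = ‖S p‖ := by
    intro p
    rw [hc]
    exact RCLike.norm_conj _
  have hterm : ∀ p ∈ P, ∀ p' ∈ P,
      ((c p * (starRingEnd ℂ) (c p')) * (E p p' * (starRingEnd ℂ) (E p p'))).re
        ≤ (‖S p‖^2/2 + ‖S p'‖^2/2) * ‖E p p'‖^2 := by
    intro p hp p' hp'
    have h1 : E p p' * (starRingEnd ℂ) (E p p') = ((‖E p p'‖^2 : ℝ) : ℂ) := by
      rw [Complex.mul_conj, Complex.normSq_eq_norm_sq]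
    rw [h1, mul_comm, Complex.re_ofReal_mul]
    have h2 : (c p * (starRingEnd ℂ) (c p')).re ≤ ‖S p‖^2/2 + ‖S p'‖^2/2 := by
      calc (c p * (starRingEnd ℂ) (c p')).re ≤ ‖c p * (starRingEnd ℂ) (c p')‖ :=
            Complex.re_le_norm _
        _ = ‖S p‖ * ‖S p'‖ := by
            rw [norm_mul]
            have hx1 : ‖(starRingEnd ℂ) (c p')‖ = ‖c p'‖ := RCLike.norm_conj _
            rw [hx1, hnormc, hnormc]
        _ ≤ ‖S p‖^2/2 + ‖S p'‖^2/2 := by nlinarith [sq_nonneg (‖S p‖ - ‖S p'‖)]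
    have h3 : (0:ℝ) ≤ ‖E p p'‖^2 := by positivity
    nlinarith
  have stepE : W ≤ (4*mr^2 + 4/δ^2) * X := by
    rw [hWre]
    rw [Complex.re_sum]
    have h1 : ∀ p ∈ P, (∑ p' ∈ P,
        (c p * (starRingEnd ℂ) (c p')) * (E p p' * (starRingEnd ℂ) (E p p'))).re
        ≤ ∑ p' ∈ P, (‖S p‖^2/2 + ‖S p'‖^2/2) * ‖E p p'‖^2 := by
      intro p hp
      rw [Complex.re_sum]
      exact Finset.sum_le_sum (fun p' hp' => hterm p hp p' hp')
    calc ∑ p ∈ P, (∑ p' ∈ P,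
          (c p * (starRingEnd ℂ) (c p')) * (E p p' * (starRingEnd ℂ) (E p p'))).re
        ≤ ∑ p ∈ P, ∑ p' ∈ P, (‖S p‖^2/2 + ‖S p'‖^2/2) * ‖E p p'‖^2 :=
          Finset.sum_le_sum h1
      _ = ∑ p ∈ P, ∑ p' ∈ P, (‖S p‖^2/2) * ‖E p p'‖^2
          + ∑ p ∈ P, ∑ p' ∈ P, (‖S p'‖^2/2) * ‖E p p'‖^2 := by
          rw [← Finset.sum_add_distrib]
          apply Finset.sum_congr rfl; intro p _
          rw [← Finset.sum_add_distrib]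
          apply Finset.sum_congr rfl; intro p' _
          ring
      _ ≤ (4*mr^2 + 4/δ^2) * X := by
          have hhalf1 : ∑ p ∈ P, ∑ p' ∈ P, (‖S p‖^2/2) * ‖E p p'‖^2
              ≤ (4*mr^2 + 4/δ^2)/2 * X := by
            calc ∑ p ∈ P, ∑ p' ∈ P, (‖S p‖^2/2) * ‖E p p'‖^2
                = ∑ p ∈ P, (‖S p‖^2/2) * ∑ p' ∈ P, ‖E p p'‖^2 := by
                  apply Finset.sum_congr rfl; intro p _
                  rw [Finset.mul_sum]
              _ ≤ ∑ p ∈ P, (‖S p‖^2/2) * (4*mr^2 + 4/δ^2) := by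
                  apply Finset.sum_le_sum
                  intro p hp
                  apply mul_le_mul_of_nonneg_left (hrow p hp) (by positivity)
              _ = (4*mr^2 + 4/δ^2)/2 * X := by
                  rw [hX, Finset.mul_sum]
                  apply Finset.sum_congr rfl; intro p _
                  ring
          have hhalf2 : ∑ p ∈ P, ∑ p' ∈ P, (‖S p'‖^2/2) * ‖E p p'‖^2
              ≤ (4*mr^2 + 4/δ^2)/2 * X := by
            rw [Finset.sum_comm]
            calc ∑ p' ∈ P, ∑ p ∈ P, (‖S p'‖^2/2) * ‖E p p'‖^2
                = ∑ p' ∈ P, (‖S p'‖^2/2) * ∑ p ∈ P, ‖E p' p‖^2 := by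
                  apply Finset.sum_congr rfl; intro p' _
                  rw [Finset.mul_sum]
                  apply Finset.sum_congr rfl; intro p _
                  rw [hEsym]
              _ ≤ ∑ p' ∈ P, (‖S p'‖^2/2) * (4*mr^2 + 4/δ^2) := by
                  apply Finset.sum_le_sum
                  intro p' hp'
                  apply mul_le_mul_of_nonneg_left (hrow p' hp') (by positivity)
              _ = (4*mr^2 + 4/δ^2)/2 * X := by
                  rw [hX, Finset.mul_sum]
                  apply Finset.sum_congr rfl; intro p' _
                  ring
          linarith
  -- Step F : conclusion
  have hmr0 : (0:ℝ) < mr + 1 := by linarith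
  have hD0 : (0:ℝ) ≤ 4*mr^2 + 4/δ^2 := by positivity
  rcases eq_or_lt_of_le hX0 with hX0' | hX0'
  · rw [← hX0']
    positivity
  · have h1 : X^2 * (mr+1) ≤ (∑ n ∈ Finset.Ioc A B, ‖T n‖^2) * ((4*mr^2 + 4/δ^2) * X) := by
      calc X^2 * (mr+1)
          ≤ ((∑ n ∈ Finset.Ioc A B, ‖T n‖^2) * (∑ n ∈ Finset.Ioc A B, ‖U n‖^2)) * (mr+1) :=
            mul_le_mul_of_nonneg_right stepB (le_of_lt hmr0)
        _ = (∑ n ∈ Finset.Ioc A B, ‖T n‖^2) * ((mr+1) * (∑ n ∈ Finset.Ioc A B, ‖U n‖^2)) := by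
            ring
        _ ≤ (∑ n ∈ Finset.Ioc A B, ‖T n‖^2) * ((4*mr^2 + 4/δ^2) * X) :=
            mul_le_mul_of_nonneg_left (le_trans stepC stepE) hTU0
    rw [div_mul_eq_mul_div, le_div_iff₀ hmr0]
    have h2 : X*(X*(mr+1)) ≤ X*((4*mr^2 + 4/δ^2) * (∑ n ∈ Finset.Ioc A B, ‖T n‖^2)) := by
      calc X*(X*(mr+1)) = X^2*(mr+1) := by ring
        _ ≤ (∑ n ∈ Finset.Ioc A B, ‖T n‖^2) * ((4*mr^2 + 4/δ^2) * X) := h1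
        _ = X*((4*mr^2 + 4/δ^2) * (∑ n ∈ Finset.Ioc A B, ‖T n‖^2)) := by ring
    exact le_of_mul_le_mul_left h2 hX0'

lemma window_identity (x y α : ℝ) (hx : 1 ≤ x) (hy1 : 1 ≤ y)
    (f : ℕ → ℂ) (hf : ∀ m : ℕ, f m ≠ 0 → 1 ≤ m ∧ (m : ℝ) ≤ x) (β : ℝ) :
    ∑ n ∈ Finset.Ioc ⌊-y⌋ ⌊x⌋,
        (∑ m ∈ Finset.Ioc n (n + ⌊y⌋), f m.toNat * e (α * m)) * e ((β - α) * n)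
      = (∑ n ∈ Finset.Icc 1 ⌊x⌋₊, f n * e (β * n)) *
        (∑ j ∈ Finset.Icc (1:ℤ) ⌊y⌋, e (-((β - α) * j))) := by
  classical
  set θ : ℝ := β - α with hθ
  set X' : ℤ := ⌊x⌋ with hX'
  set Ay : ℤ := ⌊-y⌋ with hAy
  set k' : ℤ := ⌊y⌋ with hk'
  have hx0 : (0:ℝ) < x := lt_of_lt_of_le one_pos hx
  have hX'1 : 1 ≤ X' := by
    rw [hX']
    exact Int.le_floor.2 (by exact_mod_cast hx)
  have hk'1 : 1 ≤ k' := by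
    rw [hk']
    exact Int.le_floor.2 (by exact_mod_cast hy1)
  have hAyk : Ay ≤ -k' := by
    rw [hAy, hk', Int.floor_neg]
    exact neg_le_neg (Int.floor_le_ceil y)
  set g : ℤ → ℂ := fun m => f m.toNat * e (α * m) with hg
  have hgsupp : ∀ m : ℤ, g m ≠ 0 → 1 ≤ m ∧ m ≤ X' := by
    intro m hm
    have hfm : f m.toNat ≠ 0 := by
      intro h
      apply hm
      rw [hg]
      simp [h]
    obtain ⟨h1, h2⟩ := hf m.toNat hfm
    constructor
    · omega
    · rw [hX']
      apply Int.le_floor.2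
      have : ((m.toNat : ℕ) : ℝ) = (m : ℝ) := by
        have h3 : ((m.toNat : ℕ) : ℤ) = m := Int.toNat_of_nonneg (by omega)
        exact_mod_cast congrArg (fun z : ℤ => (z : ℝ)) h3
      rw [← this]
      exact h2
  -- step 1 : extend inner sum to the support box
  have step1 : ∀ n : ℤ, (∑ m ∈ Finset.Ioc n (n + k'), g m) * e (θ * n)
      = ∑ m ∈ Finset.Icc (1:ℤ) X', (if m ∈ Finset.Ioc n (n + k') then g m * e (θ * n) else 0) := by
    intro n
    rw [Finset.sum_ite_mem, Finset.sum_mul]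
    symm
    apply Finset.sum_subset
    · exact Finset.inter_subset_right
    · intro m hm hm2
      have : g m = 0 := by
        by_contra hne
        obtain ⟨ha, hb⟩ := hgsupp m hne
        apply hm2
        rw [Finset.mem_inter]
        exact ⟨Finset.mem_Icc.2 ⟨ha, hb⟩, hm⟩
      rw [this, zero_mul]
  -- step 2 : swap and identify inner index set
  have step2 : ∑ n ∈ Finset.Ioc Ay X', ∑ m ∈ Finset.Icc (1:ℤ) X',
        (if m ∈ Finset.Ioc n (n + k') then g m * e (θ * n) else 0)
      = ∑ m ∈ Finset.Icc (1:ℤ) X', g m * ∑ n ∈ Finset.Icc (m - k') (m - 1), e (θ * n) := by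
    rw [Finset.sum_comm]
    apply Finset.sum_congr rfl
    intro m hm
    rw [Finset.mem_Icc] at hm
    have hiff : ∀ n : ℤ, (m ∈ Finset.Ioc n (n + k')) ↔ (n ∈ Finset.Icc (m - k') (m - 1)) := by
      intro n
      simp only [Finset.mem_Ioc, Finset.mem_Icc]
      omega
    calc ∑ n ∈ Finset.Ioc Ay X', (if m ∈ Finset.Ioc n (n + k') then g m * e (θ * n) else 0)
        = ∑ n ∈ Finset.Ioc Ay X', (if n ∈ Finset.Icc (m - k') (m - 1) then g m * e (θ * n) else 0) := by
          apply Finset.sum_congr rfl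
          intro n _
          simp only [hiff n]
      _ = ∑ n ∈ Finset.Ioc Ay X' ∩ Finset.Icc (m - k') (m - 1), g m * e (θ * n) :=
          Finset.sum_ite_mem _ _ _
      _ = ∑ n ∈ Finset.Icc (m - k') (m - 1), g m * e (θ * n) := by
          congr 1
          rw [Finset.inter_eq_right]
          intro n hn
          rw [Finset.mem_Icc] at hn
          rw [Finset.mem_Ioc]
          omega
      _ = g m * ∑ n ∈ Finset.Icc (m - k') (m - 1), e (θ * n) := by rw [Finset.mul_sum]
  -- step 3 : reindex the kernel sum
  have step3 : ∀ m : ℤ, ∑ n ∈ Finset.Icc (m - k') (m - 1), e (θ * n)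
      = e (θ * m) * ∑ j ∈ Finset.Icc (1:ℤ) k', e (-(θ * j)) := by
    intro m
    rw [Finset.mul_sum]
    apply Finset.sum_nbij' (i := fun n => m - n) (j := fun j => m - j)
    · intro n hn; rw [Finset.mem_Icc] at hn ⊢; omega
    · intro j hj; rw [Finset.mem_Icc] at hj ⊢; omega
    · intro n _; omega
    · intro j _; omega
    · intro n hn
      rw [show e (θ * (m:ℝ)) * e (-(θ * ((m - n : ℤ) : ℝ)))
          = e (θ * (m:ℝ) + -(θ * ((m - n : ℤ) : ℝ))) from (e_add _ _).symm]
      congr 1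
      push_cast
      ring
  -- step 4 : turn g into f with phase β
  have step4 : ∑ m ∈ Finset.Icc (1:ℤ) X', g m * e (θ * m)
      = ∑ n ∈ Finset.Icc 1 ⌊x⌋₊, f n * e (β * n) := by
    apply Finset.sum_nbij' (i := fun m : ℤ => m.toNat) (j := fun n : ℕ => (n : ℤ))
    · intro m hm
      rw [Finset.mem_Icc] at hm ⊢
      constructor
      · omega
      · rw [← Int.floor_toNat]
        omega
    · intro n hn
      rw [Finset.mem_Icc] at hn ⊢
      rw [← Int.floor_toNat] at hn
      omega
    · intro m hm; rw [Finset.mem_Icc] at hm; omega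
    · intro n _; omega
    · intro m hm
      rw [Finset.mem_Icc] at hm
      have hcast : ((m.toNat : ℕ) : ℝ) = (m : ℝ) := by
        have h3 : ((m.toNat : ℕ) : ℤ) = m := Int.toNat_of_nonneg (by omega)
        exact_mod_cast congrArg (fun z : ℤ => (z : ℝ)) h3
      rw [hg]
      rw [mul_assoc]
      rw [show e (α * m) * e (θ * m) = e (α * m + θ * m) from (e_add _ _).symm]
      congr 2
      rw [hcast, hθ]
      ring
  calc ∑ n ∈ Finset.Ioc Ay X', (∑ m ∈ Finset.Ioc n (n + k'), g m) * e (θ * n)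
      = ∑ n ∈ Finset.Ioc Ay X', ∑ m ∈ Finset.Icc (1:ℤ) X',
          (if m ∈ Finset.Ioc n (n + k') then g m * e (θ * n) else 0) :=
        Finset.sum_congr rfl (fun n _ => step1 n)
    _ = ∑ m ∈ Finset.Icc (1:ℤ) X', g m * ∑ n ∈ Finset.Icc (m - k') (m - 1), e (θ * n) := step2
    _ = ∑ m ∈ Finset.Icc (1:ℤ) X', g m * (e (θ * m) * ∑ j ∈ Finset.Icc (1:ℤ) k', e (-(θ * j))) := by
        apply Finset.sum_congr rfl
        intro m _
        rw [step3 m]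
    _ = (∑ m ∈ Finset.Icc (1:ℤ) X', g m * e (θ * m)) * (∑ j ∈ Finset.Icc (1:ℤ) k', e (-(θ * j))) := by
        rw [Finset.sum_mul]
        apply Finset.sum_congr rfl
        intro m _
        ring
    _ = (∑ n ∈ Finset.Icc 1 ⌊x⌋₊, f n * e (β * n)) * (∑ j ∈ Finset.Icc (1:ℤ) k', e (-(θ * j))) := by
        rw [step4]

lemma kernel_lower (y : ℝ) (hy1 : 1 ≤ y) {t : ℝ} (ht : |t| ≤ 1/(6*y)) :
    (2/5 : ℝ) * (⌊y⌋ : ℝ) ≤ ‖∑ j ∈ Finset.Icc (1:ℤ) ⌊y⌋, e (-(t * j))‖ := by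
  have hy0 : (0:ℝ) < y := lt_of_lt_of_le one_pos hy1
  have hk1 : 1 ≤ ⌊y⌋ := Int.le_floor.2 (by exact_mod_cast hy1)
  have hky : ((⌊y⌋:ℤ):ℝ) ≤ y := Int.floor_le y
  have hpi := Real.pi_pos
  have hpi315 : Real.pi < 3.15 := Real.pi_lt_d2
  have hre : ∀ j ∈ Finset.Icc (1:ℤ) ⌊y⌋, (2/5 : ℝ) ≤ (e (-(t * j))).re := by
    intro j hj
    rw [Finset.mem_Icc] at hj
    rw [e_re]
    have hjr1 : (1:ℝ) ≤ (j:ℝ) := by exact_mod_cast hj.1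
    have hjry : (j:ℝ) ≤ y := le_trans (by exact_mod_cast hj.2 : (j:ℝ) ≤ (⌊y⌋:ℝ)) hky
    have habs : |2 * Real.pi * -(t * j)| ≤ Real.pi / 3 := by
      rw [abs_mul, abs_neg]
      have h2pi : |2 * Real.pi| = 2 * Real.pi := abs_of_pos (by linarith)
      rw [h2pi, abs_mul]
      have hjabs : |(j:ℝ)| = (j:ℝ) := abs_of_pos (by linarith)
      rw [hjabs]
      have h1 : |t| * (j:ℝ) ≤ (1/(6*y)) * y := by
        apply mul_le_mul ht hjry (by linarith) (by positivity)
      have h2 : (1/(6*y)) * y = 1/6 := by field_simp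
      rw [h2] at h1
      calc 2 * Real.pi * (|t| * (j:ℝ)) ≤ 2 * Real.pi * (1/6) := by
            apply mul_le_mul_of_nonneg_left h1 (by linarith)
        _ = Real.pi / 3 := by ring
    have hcos := Real.one_sub_sq_div_two_le_cos (x := 2 * Real.pi * -(t * j))
    have hsq : (2 * Real.pi * -(t * j))^2 ≤ (Real.pi/3)^2 := by
      rw [← sq_abs]
      apply pow_le_pow_left₀ (abs_nonneg _) habs
    nlinarith
  have hsum : (2/5 : ℝ) * (⌊y⌋ : ℝ) ≤ (∑ j ∈ Finset.Icc (1:ℤ) ⌊y⌋, e (-(t * j))).re := by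
    rw [Complex.re_sum]
    have hcard : ((Finset.Icc (1:ℤ) ⌊y⌋).card : ℝ) = (⌊y⌋ : ℝ) := by
      rw [Int.card_Icc]
      have h1 : (⌊y⌋ + 1 - 1 : ℤ) = ⌊y⌋ := by omega
      rw [h1]
      have h2 : ((⌊y⌋.toNat : ℕ) : ℤ) = ⌊y⌋ := Int.toNat_of_nonneg (by omega)
      exact_mod_cast congrArg (fun z : ℤ => (z:ℝ)) h2
    calc (2/5 : ℝ) * (⌊y⌋ : ℝ) = ∑ _j ∈ Finset.Icc (1:ℤ) ⌊y⌋, (2/5 : ℝ) := by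
          rw [Finset.sum_const, nsmul_eq_mul, hcard]; ring
      _ ≤ ∑ j ∈ Finset.Icc (1:ℤ) ⌊y⌋, (e (-(t * j))).re := Finset.sum_le_sum hre
  calc (2/5 : ℝ) * (⌊y⌋ : ℝ) ≤ (∑ j ∈ Finset.Icc (1:ℤ) ⌊y⌋, e (-(t * j))).re := hsum
    _ ≤ ‖∑ j ∈ Finset.Icc (1:ℤ) ⌊y⌋, e (-(t * j))‖ := Complex.re_le_norm _

lemma C0_numeric (x mr qn : ℝ) (hx : 1 ≤ x) (hmr3x : mr ≤ 3*x) (hxmr : x ≤ mr+1)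
    (hmrpos : 0 ≤ mr) (hqn4 : qn^4 ≤ x^2) : 4*mr^2 + 4*qn^4 ≤ 16*x*(mr+1) := by
  nlinarith [mul_le_mul_of_nonneg_right hmr3x hmrpos, hxmr, hx, hqn4]

/-- **Theorem (main inequality via the large sieve).** There is an absolute `c > 0` such that:
for `x ≥ 1`, `f` supported on the integers of `[1,x]`, real `α`, `1 ≤ y ≤ x`,
`1 ≤ Q ≤ x^(1/2)`, one has
`Σ_{-y < n ≤ x} |F(n, n+y; α)|² ≥ c (y²/x) Σ_{a/q ∈ 𝒜(Q,y)} |F(x; a/q)|²`,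
where `𝒜(Q,y)` is the set of lowest-terms fractions `a/q`, `1 ≤ q ≤ Q`, `gcd(a,q) = 1`,
`|α - a/q| ≤ 1/(6y)` (parametrized below by the coprime pairs `(a, q)` with
`q(α - 1/(6y)) ≤ a ≤ q(α + 1/(6y))`, each rational being counted exactly once). -/
theorem large_sieve_short_interval_lower_bound :
    ∃ c : ℝ, 0 < c ∧
      ∀ (x : ℝ), 1 ≤ x → ∀ f : ℕ → ℂ, (∀ m : ℕ, f m ≠ 0 → 1 ≤ m ∧ (m : ℝ) ≤ x) →
      ∀ α y Q : ℝ, 1 ≤ y → y ≤ x → 1 ≤ Q → Q ≤ x ^ ((1 : ℝ) / 2) →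
        c * (y ^ 2 / x) *
            ∑ q ∈ Finset.Icc 1 ⌊Q⌋₊,
              ∑ a ∈ (Finset.Icc ⌈(q : ℝ) * (α - 1 / (6 * y))⌉
                  ⌊(q : ℝ) * (α + 1 / (6 * y))⌋).filter (fun a : ℤ => Int.gcd a q = 1),
                ‖∑ n ∈ Finset.Icc 1 ⌊x⌋₊, f n * e ((a : ℝ) / q * n)‖ ^ 2 ≤
          ∑ n ∈ Finset.Ioc ⌊-y⌋ ⌊x⌋,
            ‖∑ m ∈ Finset.Ioc n ⌊(n : ℝ) + y⌋, f m.toNat * e (α * m)‖ ^ 2 := by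
  classical
  refine ⟨1/400, by norm_num, ?_⟩
  intro x hx f hf α y Q hy1 hyx hQ1 hQx
  have hx0 : (0:ℝ) < x := lt_of_lt_of_le one_pos hx
  have hy0 : (0:ℝ) < y := lt_of_lt_of_le one_pos hy1
  have hQ0 : (0:ℝ) < Q := lt_of_lt_of_le one_pos hQ1
  -- basic integer quantities
  have hX'1 : (1:ℤ) ≤ ⌊x⌋ := Int.le_floor.2 (by exact_mod_cast hx)
  have hk'1 : (1:ℤ) ≤ ⌊y⌋ := Int.le_floor.2 (by exact_mod_cast hy1)
  have hAy1 : ⌊-y⌋ ≤ (-1 : ℤ) := by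
    have h1 : ⌊(-y : ℝ)⌋ ≤ ⌊(-1 : ℝ)⌋ := Int.floor_le_floor (by linarith)
    have h2 : ⌊(-1 : ℝ)⌋ = (-1 : ℤ) := by norm_num
    omega
  have hX'x : ((⌊x⌋:ℤ):ℝ) ≤ x := Int.floor_le x
  have hX'x' : x - 1 < ((⌊x⌋:ℤ):ℝ) := Int.sub_one_lt_floor x
  have hAyy : -y - 1 < ((⌊-y⌋:ℤ):ℝ) := Int.sub_one_lt_floor (-y)
  have hk'y : ((⌊y⌋:ℤ):ℝ) ≤ y := Int.floor_le y
  have hk'y2 : y ≤ 2*((⌊y⌋:ℤ):ℝ) := by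
    have h1 : y - 1 < ((⌊y⌋:ℤ):ℝ) := Int.sub_one_lt_floor y
    have h2 : (1:ℝ) ≤ ((⌊y⌋:ℤ):ℝ) := by exact_mod_cast hk'1
    rcases le_or_gt y 2 with h | h
    · linarith
    · linarith
  -- floor Q facts
  have hQn1 : 1 ≤ ⌊Q⌋₊ := Nat.le_floor (by exact_mod_cast hQ1)
  have hQnQ : ((⌊Q⌋₊:ℕ):ℝ) ≤ Q := Nat.floor_le (le_of_lt hQ0)
  have hQnr1 : (1:ℝ) ≤ ((⌊Q⌋₊:ℕ):ℝ) := by exact_mod_cast hQn1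
  have hQ2x : Q^2 ≤ x := by
    have h12 : (x ^ ((1:ℝ)/2))^2 = x := by
      rw [← Real.rpow_natCast (x ^ ((1:ℝ)/2)) 2, ← Real.rpow_mul (le_of_lt hx0)]
      norm_num
    calc Q^2 ≤ (x ^ ((1:ℝ)/2))^2 := by
          apply pow_le_pow_left₀ (le_of_lt hQ0) hQx
      _ = x := h12
  -- the index family
  set θ : (Σ _ : ℕ, ℤ) → ℝ := fun p => (p.2:ℝ)/(p.1:ℝ) - α with hθ
  set P : Finset (Σ _ : ℕ, ℤ) := (Finset.Icc 1 ⌊Q⌋₊).sigma (fun q =>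
    (Finset.Icc ⌈(q:ℝ)*(α - 1/(6*y))⌉ ⌊(q:ℝ)*(α + 1/(6*y))⌋).filter
      (fun a : ℤ => Int.gcd a q = 1)) with hP
  have hmemP : ∀ p : (Σ _ : ℕ, ℤ), p ∈ P → 1 ≤ p.1 ∧ p.1 ≤ ⌊Q⌋₊ ∧
      (p.1:ℝ)*(α - 1/(6*y)) ≤ (p.2:ℝ) ∧ (p.2:ℝ) ≤ (p.1:ℝ)*(α + 1/(6*y)) ∧
      Int.gcd p.2 p.1 = 1 := by
    intro p hp
    rw [hP, Finset.mem_sigma, Finset.mem_Icc] at hp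
    obtain ⟨⟨h1, h2⟩, h3⟩ := hp
    rw [Finset.mem_filter, Finset.mem_Icc] at h3
    refine ⟨h1, h2, ?_, ?_, h3.2⟩
    · exact Int.ceil_le.1 h3.1.1
    · exact Int.le_floor.1 h3.1.2
  have hboundε : ∀ p ∈ P, |θ p| ≤ 1/(6*y) := by
    intro p hp
    obtain ⟨h1, _, h3, h4, _⟩ := hmemP p hp
    have hq0 : (0:ℝ) < (p.1:ℝ) := by exact_mod_cast Nat.lt_of_lt_of_le Nat.zero_lt_one h1
    rw [hθ, abs_le]
    constructor
    · have : α - 1/(6*y) ≤ (p.2:ℝ)/(p.1:ℝ) := by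
        rw [le_div_iff₀ hq0]
        calc (α - 1/(6*y)) * (p.1:ℝ) = (p.1:ℝ)*(α - 1/(6*y)) := by ring
          _ ≤ (p.2:ℝ) := h3
      linarith
    · have : (p.2:ℝ)/(p.1:ℝ) ≤ α + 1/(6*y) := by
        rw [div_le_iff₀ hq0]
        calc (p.2:ℝ) ≤ (p.1:ℝ)*(α + 1/(6*y)) := h4
          _ = (α + 1/(6*y)) * (p.1:ℝ) := by ring
      linarith
  have hbound : ∀ p ∈ P, |θ p| ≤ 1/6 := by
    intro p hp
    have h1 := hboundε p hp
    have h2 : 1/(6*y) ≤ 1/6 := by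
      rw [div_le_div_iff₀ (by positivity) (by norm_num)]
      linarith
    linarith
  -- separation
  set δ : ℝ := 1/((⌊Q⌋₊:ℕ):ℝ)^2 with hδdef
  have hδ0 : (0:ℝ) < δ := by rw [hδdef]; positivity
  have hsep : ∀ p ∈ P, ∀ p' ∈ P, p ≠ p' → δ ≤ |θ p - θ p'| := by
    rintro ⟨q, a⟩ hp ⟨q', a'⟩ hp' hne
    obtain ⟨hq1, hq2, _, _, hg⟩ := hmemP _ hp
    obtain ⟨hq1', hq2', _, _, hg'⟩ := hmemP _ hp'
    simp only at hq1 hq2 hg hq1' hq2' hg'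
    have hq0 : (0:ℝ) < (q:ℝ) := by exact_mod_cast Nat.lt_of_lt_of_le Nat.zero_lt_one hq1
    have hq0' : (0:ℝ) < (q':ℝ) := by exact_mod_cast Nat.lt_of_lt_of_le Nat.zero_lt_one hq1'
    have hqz : (q:ℤ) ≠ 0 := by exact_mod_cast (by omega : (q:ℕ) ≠ 0)
    have hnum : a * (q':ℤ) - a' * (q:ℤ) ≠ 0 := by
      intro h0
      have heq : a * (q':ℤ) = a' * (q:ℤ) := by omega
      have hco : IsCoprime (a:ℤ) ((q:ℕ):ℤ) := Int.isCoprime_iff_gcd_eq_one.mpr hg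
      have hco' : IsCoprime (a':ℤ) ((q':ℕ):ℤ) := Int.isCoprime_iff_gcd_eq_one.mpr hg'
      have hdvd1 : ((q:ℕ):ℤ) ∣ ((q':ℕ):ℤ) := by
        apply hco.symm.dvd_of_dvd_mul_left
        exact ⟨a', by linarith [heq]⟩
      have hdvd2 : ((q':ℕ):ℤ) ∣ ((q:ℕ):ℤ) := by
        apply hco'.symm.dvd_of_dvd_mul_left
        exact ⟨a, by linarith [heq]⟩
      have hqq : (q:ℕ) = (q':ℕ) := by
        have := Int.dvd_antisymm (by positivity) (by positivity) hdvd1 hdvd2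
        exact_mod_cast this
      subst hqq
      have haa : a = a' := by
        have : a * (q:ℤ) = a' * (q:ℤ) := heq
        exact mul_right_cancel₀ hqz this
      subst haa
      exact hne rfl
    have hval : θ ⟨q, a⟩ - θ ⟨q', a'⟩ = ((a * q' - a' * q : ℤ) : ℝ)/((q:ℝ) * (q':ℝ)) := by
      rw [hθ]
      simp only
      field_simp
      push_cast
      ring
    rw [hval, abs_div]
    have hden : |(q:ℝ)*(q':ℝ)| = (q:ℝ)*(q':ℝ) := abs_of_pos (by positivity)
    rw [hden]
    have hnum1 : (1:ℝ) ≤ |((a * q' - a' * q : ℤ) : ℝ)| := by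
      have h1 : (1:ℤ) ≤ |a * q' - a' * q| := Int.one_le_abs hnum
      calc (1:ℝ) = ((1:ℤ):ℝ) := by norm_num
        _ ≤ ((|a * q' - a' * q| : ℤ) : ℝ) := by exact_mod_cast h1
        _ = |((a * q' - a' * q : ℤ) : ℝ)| := by rw [Int.cast_abs]
    have hqq' : (q:ℝ)*(q':ℝ) ≤ ((⌊Q⌋₊:ℕ):ℝ)^2 := by
      have h1 : (q:ℝ) ≤ ((⌊Q⌋₊:ℕ):ℝ) := by exact_mod_cast hq2
      have h2 : (q':ℝ) ≤ ((⌊Q⌋₊:ℕ):ℝ) := by exact_mod_cast hq2'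
      nlinarith
    rw [hδdef, div_le_div_iff₀ (by positivity) (by positivity)]
    calc 1 * ((q:ℝ)*(q':ℝ)) = (q:ℝ)*(q':ℝ) := one_mul _
      _ ≤ ((⌊Q⌋₊:ℕ):ℝ)^2 := hqq'
      _ = 1 * ((⌊Q⌋₊:ℕ):ℝ)^2 := (one_mul _).symm
      _ ≤ |((a * q' - a' * q : ℤ) : ℝ)| * ((⌊Q⌋₊:ℕ):ℝ)^2 :=
          mul_le_mul_of_nonneg_right hnum1 (by positivity)
  -- the short-interval sums
  set T : ℤ → ℂ := fun n => ∑ m ∈ Finset.Ioc n (n + ⌊y⌋), f m.toNat * e (α * m) with hT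
  set R : ℝ := ∑ n ∈ Finset.Ioc ⌊-y⌋ ⌊x⌋, ‖T n‖^2 with hR
  have hR0 : 0 ≤ R := Finset.sum_nonneg (fun n _ => by positivity)
  -- large sieve
  have hLS := large_sieve P θ δ hδ0 hbound hsep ⌊-y⌋ ⌊x⌋ hAy1 hX'1 T
  -- per-point lower bound
  set F : (Σ _ : ℕ, ℤ) → ℂ := fun p => ∑ n ∈ Finset.Icc 1 ⌊x⌋₊, f n * e ((p.2:ℝ)/(p.1:ℝ) * n)
    with hF
  have hSF : ∀ p ∈ P, ‖F p‖^2 * (y^2/25)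
      ≤ ‖∑ n ∈ Finset.Ioc ⌊-y⌋ ⌊x⌋, T n * e (θ p * n)‖^2 := by
    intro p hp
    have hid := window_identity x y α hx hy1 f hf ((p.2:ℝ)/(p.1:ℝ))
    have hθp : θ p = (p.2:ℝ)/(p.1:ℝ) - α := by rw [hθ]
    have hker := kernel_lower y hy1 (t := θ p) (hboundε p hp)
    have hSid : ∑ n ∈ Finset.Ioc ⌊-y⌋ ⌊x⌋, T n * e (θ p * n)
        = F p * (∑ j ∈ Finset.Icc (1:ℤ) ⌊y⌋, e (-(θ p * j))) := by
      rw [hT, hF]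
      calc ∑ n ∈ Finset.Ioc ⌊-y⌋ ⌊x⌋,
            (∑ m ∈ Finset.Ioc n (n + ⌊y⌋), f m.toNat * e (α * m)) * e (θ p * n)
          = ∑ n ∈ Finset.Ioc ⌊-y⌋ ⌊x⌋,
            (∑ m ∈ Finset.Ioc n (n + ⌊y⌋), f m.toNat * e (α * m)) * e (((p.2:ℝ)/(p.1:ℝ) - α) * n) := by
            apply Finset.sum_congr rfl; intro n _; rw [hθp]
        _ = (∑ n ∈ Finset.Icc 1 ⌊x⌋₊, f n * e ((p.2:ℝ)/(p.1:ℝ) * n)) *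
            (∑ j ∈ Finset.Icc (1:ℤ) ⌊y⌋, e (-(((p.2:ℝ)/(p.1:ℝ) - α) * j))) := hid
        _ = (∑ n ∈ Finset.Icc 1 ⌊x⌋₊, f n * e ((p.2:ℝ)/(p.1:ℝ) * n)) *
            (∑ j ∈ Finset.Icc (1:ℤ) ⌊y⌋, e (-(θ p * j))) := by
            rw [hθp]
    rw [hSid, norm_mul, mul_pow]
    apply mul_le_mul_of_nonneg_left _ (by positivity)
    have h1 : y/5 ≤ (2/5) * ((⌊y⌋:ℤ):ℝ) := by linarith
    have h2 : (0:ℝ) ≤ y/5 := by positivity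
    calc y^2/25 = (y/5)^2 := by ring
      _ ≤ ((2/5) * ((⌊y⌋:ℤ):ℝ))^2 := by apply pow_le_pow_left₀ h2 (by linarith)
      _ ≤ ‖∑ j ∈ Finset.Icc (1:ℤ) ⌊y⌋, e (-(θ p * j))‖^2 := by
          apply pow_le_pow_left₀ (by positivity) hker
  -- numeric bound on the large sieve constant
  set mr : ℝ := ((⌊x⌋:ℤ):ℝ) - ((⌊-y⌋:ℤ):ℝ) with hmr
  have hmr3x : mr ≤ 3*x := by
    have h1 : ((⌊-y⌋:ℤ):ℝ) ≥ -y - 1 := le_of_lt hAyy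
    rw [hmr]; linarith
  have hxmr : x ≤ mr + 1 := by
    have h1 : ((⌊-y⌋:ℤ):ℝ) ≤ -1 := by exact_mod_cast hAy1
    rw [hmr]; linarith
  have hmr0 : (0:ℝ) < mr + 1 := by linarith
  have hC0 : (4*mr^2 + 4/δ^2)/(mr+1) ≤ 16*x := by
    rw [div_le_iff₀ hmr0]
    have hδ2 : 4/δ^2 = 4*((⌊Q⌋₊:ℕ):ℝ)^4 := by
      rw [hδdef]
      field_simp
    have hQn2 : ((⌊Q⌋₊:ℕ):ℝ)^2 ≤ x := by
      calc ((⌊Q⌋₊:ℕ):ℝ)^2 ≤ Q^2 := by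
            apply pow_le_pow_left₀ (by positivity) hQnQ
        _ ≤ x := hQ2x
    have hQn4 : ((⌊Q⌋₊:ℕ):ℝ)^4 ≤ x^2 := by
      calc ((⌊Q⌋₊:ℕ):ℝ)^4 = (((⌊Q⌋₊:ℕ):ℝ)^2)^2 := by ring
        _ ≤ x^2 := by apply pow_le_pow_left₀ (by positivity) hQn2
    have hmrpos : (0:ℝ) ≤ mr := by linarith
    rw [hδ2]
    exact C0_numeric x mr _ hx hmr3x hxmr hmrpos hQn4
  -- assemble
  have hchain : (∑ p ∈ P, ‖F p‖^2) * (y^2/25) ≤ 16*x*R := by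
    calc (∑ p ∈ P, ‖F p‖^2) * (y^2/25)
        = ∑ p ∈ P, ‖F p‖^2 * (y^2/25) := by rw [Finset.sum_mul]
      _ ≤ ∑ p ∈ P, ‖∑ n ∈ Finset.Ioc ⌊-y⌋ ⌊x⌋, T n * e (θ p * n)‖^2 :=
          Finset.sum_le_sum hSF
      _ ≤ ((4*mr^2 + 4/δ^2)/(mr+1)) * R := hLS
      _ ≤ 16*x*R := by
          apply mul_le_mul_of_nonneg_right hC0 hR0
  -- rewrite goal
  have hgoalL : ∑ q ∈ Finset.Icc 1 ⌊Q⌋₊,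
      ∑ a ∈ (Finset.Icc ⌈(q : ℝ) * (α - 1 / (6 * y))⌉
          ⌊(q : ℝ) * (α + 1 / (6 * y))⌋).filter (fun a : ℤ => Int.gcd a q = 1),
        ‖∑ n ∈ Finset.Icc 1 ⌊x⌋₊, f n * e ((a : ℝ) / q * n)‖ ^ 2
      = ∑ p ∈ P, ‖F p‖^2 := by
    rw [hP, Finset.sum_sigma]
  have hgoalR : ∑ n ∈ Finset.Ioc ⌊-y⌋ ⌊x⌋,
      ‖∑ m ∈ Finset.Ioc n ⌊(n : ℝ) + y⌋, f m.toNat * e (α * m)‖ ^ 2 = R := by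
    rw [hR]
    apply Finset.sum_congr rfl
    intro n _
    congr 2
    rw [Int.floor_intCast_add]
  rw [hgoalL, hgoalR]
  have hfin : (1:ℝ)/400 * (y^2/x) * (∑ p ∈ P, ‖F p‖^2)
      = ((∑ p ∈ P, ‖F p‖^2) * (y^2/25)) * (25/(400*x)) := by
    field_simp
  rw [hfin]
  calc ((∑ p ∈ P, ‖F p‖^2) * (y^2/25)) * (25/(400*x))
      ≤ (16*x*R) * (25/(400*x)) := by
        apply mul_le_mul_of_nonneg_right hchain (by positivity)
    _ = R := by field_simp; ring
end

section
/- There exist absolute constants C ≥ 1 and 0 < c₁ ≤ c₂ such that the following holds. Let α be real, let u be an integer and s ≥ 1 an integer with gcd(u, s) = 1 and |α − u/s| ≤ 1/s², and let Q be a real number with Q ≥ C·s. Then the number of distinct rationals r such that there exists an integer q with Q < q ≤ 2Q and q·r ∈ ℤ, and such that |α − r| ≤ 2/s², lies between c₁·Q²/s² and c₂·Q²/s². -/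
open Finset

private lemma sum_inv_sq_aux (M : ℕ) : ∑ n ∈ Finset.Icc 5 (M+4), (1:ℝ)/(n:ℝ)^2 ≤ 1/4 - 1/(M+4) := by
  induction M with
  | zero => norm_num
  | succ m ih =>
    have heq : m + 1 + 4 = (m + 4) + 1 := by omega
    rw [heq, Finset.sum_Icc_succ_top (by omega)]
    have hm : (0:ℝ) < (m:ℝ) + 4 := by positivity
    have hm5 : ((m + 4 + 1 : ℕ) : ℝ) = (m:ℝ) + 5 := by push_cast; ring
    have key : (1:ℝ)/((m:ℝ)+5)^2 ≤ 1/((m:ℝ)+4) - 1/((m:ℝ)+5) := by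
      rw [div_sub_div _ _ (by positivity) (by positivity)]
      rw [div_le_div_iff₀ (by positivity) (by positivity)]
      ring_nf
      nlinarith [sq_nonneg ((m:ℝ)+4)]
    have hc : ((m+4:ℕ):ℝ) = (m:ℝ) + 4 := by push_cast; ring
    rw [hm5]
    calc ∑ n ∈ Finset.Icc 5 (m+4), (1:ℝ)/(n:ℝ)^2 + 1/((m:ℝ)+5)^2
        ≤ (1/4 - 1/((m:ℝ)+4)) + (1/((m:ℝ)+4) - 1/((m:ℝ)+5)) := by
          apply add_le_add
          · simpa [hc] using ih
          · exact key
      _ = 1/4 - 1/((m:ℝ)+5) := by ring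
      _ ≤ 1/4 - 1/(((m+1:ℕ):ℝ)+4) := by push_cast; ring_nf; norm_num

private lemma sum_inv_sq_le (M : ℕ) : ∑ n ∈ Finset.Icc 5 M, (1:ℝ)/(n:ℝ)^2 ≤ 1/4 := by
  rcases le_or_gt 5 M with h | h
  · obtain ⟨m, rfl⟩ : ∃ m, M = m + 4 := ⟨M - 4, by omega⟩
    have h1 := sum_inv_sq_aux m
    have hpos : (0:ℝ) < (m:ℝ) + 4 := by positivity
    nlinarith [one_div_pos.mpr hpos]
  · have : Finset.Icc 5 M = ∅ := by apply Finset.Icc_eq_empty; omega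
    simp [this]

private lemma sum_inv_le_sqrt (M : ℕ) : ∑ n ∈ Finset.Icc 1 M, (1:ℝ)/(n:ℝ) ≤ 2 * Real.sqrt M := by
  induction M with
  | zero => simp
  | succ m ih =>
    rw [Finset.sum_Icc_succ_top (by omega)]
    have hcast : ((m+1:ℕ):ℝ) = (m:ℝ)+1 := by push_cast; ring
    rw [hcast]
    set a := Real.sqrt ((m:ℝ)+1) with ha
    set b := Real.sqrt (m:ℝ) with hb
    have ha2 : a^2 = (m:ℝ)+1 := Real.sq_sqrt (by positivity)
    have hb2 : b^2 = (m:ℝ) := Real.sq_sqrt (by positivity)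
    have ha0 : 0 ≤ a := Real.sqrt_nonneg _
    have hb0 : 0 ≤ b := Real.sqrt_nonneg _
    have ha1 : 1 ≤ a := by nlinarith
    have key : 1/((m:ℝ)+1) ≤ 2*(a - b) := by
      have hab : (a - b)*(a + b) = 1 := by nlinarith
      have hpos : (0:ℝ) < (m:ℝ)+1 := by positivity
      rw [div_le_iff₀ hpos]
      nlinarith [sq_nonneg (a-b), sq_nonneg (a+b), mul_nonneg ha0 hb0]
    have hsum : ∑ n ∈ Finset.Icc 1 m, (1:ℝ)/(n:ℝ) + 1/((m:ℝ)+1) ≤ 2*b + 2*(a-b) := by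
      apply add_le_add _ key
      simpa [hb] using ih
    calc ∑ n ∈ Finset.Icc 1 m, (1:ℝ)/(n:ℝ) + 1/((m:ℝ)+1) ≤ 2*b + 2*(a-b) := hsum
      _ = 2*a := by ring

private lemma card_residue_Ioc (a b r n : ℤ) (hn : 0 < n) (hab : a ≤ b) :
    ((((Finset.Ioc a b).filter (fun x => n ∣ (x - r))).card : ℝ)) ≤ (b - a : ℝ)/(n:ℝ) + 1 := by
  classical
  have hsub : ∀ x ∈ (Finset.Ioc a b).filter (fun x => n ∣ (x - r)),
      (x - r)/n ∈ Finset.Ioc ((a - r)/n) ((b - r)/n) := by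
    intro x hx
    rw [Finset.mem_filter, Finset.mem_Ioc] at hx
    obtain ⟨⟨hax, hxb⟩, hdvd⟩ := hx
    rw [Finset.mem_Ioc]
    constructor
    · by_contra hle
      push_neg at hle
      have h1 : (x - r)/n * n = x - r := Int.ediv_mul_cancel hdvd
      have h2 : (x - r)/n * n ≤ (a - r)/n * n := by
        apply mul_le_mul_of_nonneg_right hle (le_of_lt hn)
      have h3 := Int.mul_ediv_add_emod (a - r) n
      have h4 := Int.emod_nonneg (a - r) (ne_of_gt hn)
      have h5 : (a - r)/n * n ≤ a - r := by nlinarith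
      linarith
    · exact Int.ediv_le_ediv hn (by omega)
  have hinj : Set.InjOn (fun x => (x - r)/n) ((Finset.Ioc a b).filter (fun x => n ∣ (x - r))) := by
    intro x hx y hy hxy
    simp only [Finset.coe_filter, Set.mem_setOf_eq] at hx hy
    have h1 : (x - r)/n * n = x - r := Int.ediv_mul_cancel hx.2
    have h2 : (y - r)/n * n = y - r := Int.ediv_mul_cancel hy.2
    simp only at hxy
    rw [hxy] at h1
    linarith
  have hcard := Finset.card_le_card_of_injOn _ hsub hinj
  rw [Int.card_Ioc] at hcard
  set A := (a - r) / n with hA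
  set B := (b - r) / n with hB
  have h1 : ((B - A).toNat : ℝ) ≤ (b - a : ℝ)/(n:ℝ) + 1 := by
    rcases le_or_gt (B - A) 0 with h | h
    · have hz : (B - A).toNat = 0 := Int.toNat_of_nonpos h
      rw [hz]
      have : (0:ℝ) ≤ (b - a : ℝ)/(n:ℝ) := by
        apply div_nonneg _ (by exact_mod_cast le_of_lt hn)
        have : (a:ℝ) ≤ b := by exact_mod_cast hab
        linarith
      simp; linarith
    · have htn : ((B - A).toNat : ℤ) = B - A := Int.toNat_of_nonneg (le_of_lt h)
      have hBr : (B : ℝ) * n ≤ (b - r : ℝ) := by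
        have h3 := Int.mul_ediv_add_emod (b - r) n
        have h4 := Int.emod_nonneg (b - r) (ne_of_gt hn)
        have h5 : (n : ℤ) * B ≤ b - r := by rw [hB]; nlinarith
        calc (B:ℝ) * n = ((n * B : ℤ) : ℝ) := by push_cast; ring
          _ ≤ ((b - r : ℤ):ℝ) := by exact_mod_cast h5
          _ = (b : ℝ) - r := by push_cast; ring
      have hAr : (a - r : ℝ) - n < (A : ℝ) * n := by
        have h3 := Int.mul_ediv_add_emod (a - r) n
        have h4 := Int.emod_lt_of_pos (a - r) hn
        have h5 : a - r - n < n * A := by rw [hA]; nlinarith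
        calc (a - r : ℝ) - n = ((a - r - n : ℤ) : ℝ) := by push_cast; ring
          _ < ((n * A : ℤ):ℝ) := by exact_mod_cast h5
          _ = (A:ℝ) * n := by push_cast; ring
      have hn' : (0:ℝ) < (n:ℝ) := by exact_mod_cast hn
      have hfin : ((B - A : ℤ) : ℝ) ≤ (b - a : ℝ)/(n:ℝ) + 1 := by
        rw [div_add' _ _ _ (ne_of_gt hn'), le_div_iff₀ hn']
        push_cast
        nlinarith
      rw [← htn] at hfin
      exact_mod_cast hfin
  calc ((((Finset.Ioc a b).filter (fun x => n ∣ (x - r))).card : ℝ))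
      ≤ ((B - A).toNat : ℝ) := by exact_mod_cast hcard
    _ ≤ (b - a : ℝ)/(n:ℝ) + 1 := h1

private lemma card_dvd_6i1 (I n : ℤ) (hn : 0 < n) (hI : 0 ≤ I) :
    (((Finset.Icc 0 I).filter (fun i => n ∣ 6*i+1)).card : ℝ) ≤ ((I:ℝ)+1)/(n:ℝ) + 1 := by
  classical
  rcases Finset.eq_empty_or_nonempty ((Finset.Icc 0 I).filter (fun i => n ∣ 6*i+1)) with he | ⟨i₀, hi₀⟩
  · rw [he]
    simp
    have h1 : (0:ℝ) < (n:ℝ) := by exact_mod_cast hn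
    have h2 : (0:ℝ) ≤ (I:ℝ) := by exact_mod_cast hI
    positivity
  · rw [Finset.mem_filter] at hi₀
    obtain ⟨t, ht⟩ := hi₀.2
    have hcop : IsCoprime n 6 := by
      refine ⟨t, -i₀, ?_⟩
      linarith [ht]
    have hsub : ((Finset.Icc 0 I).filter (fun i => n ∣ 6*i+1)) ⊆
        ((Finset.Ioc (-1) I).filter (fun x => n ∣ (x - i₀))) := by
      intro x hx
      rw [Finset.mem_filter, Finset.mem_Icc] at hx
      rw [Finset.mem_filter, Finset.mem_Ioc]
      refine ⟨⟨by omega, hx.1.2⟩, ?_⟩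
      have h6 : n ∣ (x - i₀)*6 := by
        have heq : (x - i₀)*6 = (6*x+1) - (6*i₀+1) := by ring
        rw [heq]
        exact dvd_sub hx.2 hi₀.2
      exact hcop.dvd_of_dvd_mul_right h6
    have hc := Finset.card_le_card hsub
    have hcr : ((((Finset.Icc 0 I).filter (fun i => n ∣ 6*i+1)).card : ℝ)) ≤ ((I:ℝ) - (-1))/(n:ℝ) + 1 := by
      calc ((((Finset.Icc 0 I).filter (fun i => n ∣ 6*i+1)).card : ℝ))
          ≤ ((((Finset.Ioc (-1) I).filter (fun x => n ∣ (x - i₀))).card : ℝ)) := by exact_mod_cast hc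
        _ ≤ ((I:ℝ) - (-1))/(n:ℝ) + 1 := by
            have h := card_residue_Ioc (-1) I i₀ n hn (by omega)
            convert h using 3
            push_cast
            ring
    convert hcr using 3
    ring

set_option maxHeartbeats 2000000 in
/-- **Lemma (rational approximations in dyadic ranges).** There are absolute constants
`C ≥ 1` and `0 < c₁ ≤ c₂` such that: if `|α - u/s| ≤ 1/s²` with `gcd(u,s)=1`, `s ≥ 1`, then
for every real `Q ≥ Cs`, the number of distinct rationals `r` expressible with a denominator
`q ∈ (Q, 2Q]` (i.e. `q·r ∈ ℤ` for some integer `Q < q ≤ 2Q`) and satisfying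
`|α - r| ≤ 2/s²` lies between `c₁ Q²/s²` and `c₂ Q²/s²`. -/
theorem count_rational_approximations_dyadic :
    ∃ C : ℝ, 1 ≤ C ∧ ∃ c₁ c₂ : ℝ, 0 < c₁ ∧ c₁ ≤ c₂ ∧
      ∀ (α : ℝ) (u : ℤ) (s : ℕ), 1 ≤ s → Int.gcd u s = 1 →
        |α - (u : ℝ) / s| ≤ 1 / (s : ℝ) ^ 2 →
        ∀ Q : ℝ, C * s ≤ Q →
          c₁ * Q ^ 2 / (s : ℝ) ^ 2 ≤
            ({r : ℚ | (∃ q : ℤ, (Q : ℝ) < (q : ℝ) ∧ (q : ℝ) ≤ 2 * Q ∧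
                ∃ a : ℤ, r = (a : ℚ) / (q : ℚ)) ∧
                |α - (r : ℝ)| ≤ 2 / (s : ℝ) ^ 2}.ncard : ℝ) ∧
          ({r : ℚ | (∃ q : ℤ, (Q : ℝ) < (q : ℝ) ∧ (q : ℝ) ≤ 2 * Q ∧
                ∃ a : ℤ, r = (a : ℚ) / (q : ℚ)) ∧
                |α - (r : ℝ)| ≤ 2 / (s : ℝ) ^ 2}.ncard : ℝ) ≤
            c₂ * Q ^ 2 / (s : ℝ) ^ 2 := by
  classical
  refine ⟨1000000, by norm_num, 1/36, 17, by norm_num, by norm_num, ?_⟩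
  intro α u s hs hgcd happ Q hQ
  set T : Set ℚ := {r : ℚ | (∃ q : ℤ, (Q : ℝ) < (q : ℝ) ∧ (q : ℝ) ≤ 2 * Q ∧
                ∃ a : ℤ, r = (a : ℚ) / (q : ℚ)) ∧
                |α - (r : ℝ)| ≤ 2 / (s : ℝ) ^ 2} with hTdef
  have hs1 : (1:ℝ) ≤ (s:ℝ) := by exact_mod_cast hs
  have hsp : (0:ℝ) < (s:ℝ) := by linarith
  have hQ' : 1000000 * (s:ℝ) ≤ Q := hQ
  have hQpos : 0 < Q := by nlinarith
  set X := Q/(2*(s:ℝ)) with hXdef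
  have hQeq : Q = 2*(s:ℝ)*X := by rw [hXdef]; field_simp
  have hX : 500000 ≤ X := by
    rw [hXdef, le_div_iff₀ (by linarith)]; linarith
  have hXpos : (0:ℝ) < X := by linarith
  -- ===================== upper bound ======================
  have spacing : ∀ r ∈ T, ∀ r' ∈ T, r ≠ r' → 1/(4*Q^2) ≤ |(r:ℝ) - (r':ℝ)| := by
    intro r hr r' hr' hne
    rw [hTdef, Set.mem_setOf_eq] at hr hr'
    obtain ⟨⟨q, hq1, hq2, a, rfl⟩, -⟩ := hr
    obtain ⟨⟨q', hq1', hq2', a', rfl⟩, -⟩ := hr'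
    have hqpos : (0:ℝ) < (q:ℝ) := lt_trans hQpos hq1
    have hqpos' : (0:ℝ) < (q':ℝ) := lt_trans hQpos hq1'
    have hqZ : (q:ℚ) ≠ 0 := by
      have : (0:ℤ) < q := by exact_mod_cast hqpos
      exact_mod_cast ne_of_gt this
    have hqZ' : (q':ℚ) ≠ 0 := by
      have : (0:ℤ) < q' := by exact_mod_cast hqpos'
      exact_mod_cast ne_of_gt this
    have hnum : a * q' - a' * q ≠ 0 := by
      intro h
      apply hne
      rw [div_eq_div_iff (by exact_mod_cast hqZ) (by exact_mod_cast hqZ')]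
      have : a * q' = a' * q := by linarith
      exact_mod_cast this
    have h1 : (1:ℝ) ≤ |(a:ℝ)*(q':ℝ) - (a':ℝ)*(q:ℝ)| := by
      have h2 : 1 ≤ |a * q' - a' * q| := Int.one_le_abs hnum
      calc (1:ℝ) = ((1:ℤ):ℝ) := by norm_num
        _ ≤ ((|a * q' - a' * q| : ℤ) : ℝ) := by exact_mod_cast h2
        _ = |(a:ℝ)*(q':ℝ) - (a':ℝ)*(q:ℝ)| := by push_cast; ring_nf
    have hdiff : (((a:ℚ)/(q:ℚ) : ℚ):ℝ) - (((a':ℚ)/(q':ℚ) : ℚ):ℝ)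
        = ((a:ℝ)*(q':ℝ) - (a':ℝ)*(q:ℝ))/((q:ℝ)*(q':ℝ)) := by
      push_cast
      field_simp
    rw [hdiff, abs_div, abs_of_pos (by positivity : (0:ℝ) < (q:ℝ)*(q':ℝ))]
    rw [div_le_div_iff₀ (by positivity) (by positivity)]
    have hqq : (q:ℝ)*(q':ℝ) ≤ 4*Q^2 := by nlinarith
    nlinarith [abs_nonneg ((a:ℝ)*(q':ℝ) - (a':ℝ)*(q:ℝ))]
  set φ : ℚ → ℤ := fun r => ⌊(((r:ℚ):ℝ) - α + 2/(s:ℝ)^2) * (4*Q^2)⌋ with hφdef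
  set N : ℤ := ⌊16*Q^2/(s:ℝ)^2⌋ with hNdef
  have hmaps : ∀ r ∈ T, φ r ∈ (Finset.Icc (0:ℤ) N : Finset ℤ) := by
    intro r hr
    have hr2 : |α - (r:ℝ)| ≤ 2/(s:ℝ)^2 := hr.2
    rw [abs_le] at hr2
    rw [Finset.mem_Icc]
    constructor
    · apply Int.le_floor.mpr
      push_cast
      have : (0:ℝ) ≤ ((r:ℝ) - α + 2/(s:ℝ)^2) := by linarith [hr2.2]
      positivity
    · rw [hNdef]
      apply Int.floor_le_floor
      have hre : (4:ℝ)/(s:ℝ)^2 = 2/(s:ℝ)^2 + 2/(s:ℝ)^2 := by ring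
      have h1 : ((r:ℝ) - α + 2/(s:ℝ)^2) ≤ 4/(s:ℝ)^2 := by rw [hre]; linarith [hr2.1]
      have h2 : (0:ℝ) ≤ 4*Q^2 := by positivity
      calc ((r:ℝ) - α + 2/(s:ℝ)^2) * (4*Q^2) ≤ (4/(s:ℝ)^2) * (4*Q^2) := by
            exact mul_le_mul_of_nonneg_right h1 h2
        _ = 16*Q^2/(s:ℝ)^2 := by field_simp; ring
  have hinjφ : Set.InjOn φ T := by
    intro r hr r' hr' heq
    by_contra hne
    have hsp2 := spacing r hr r' hr' hne
    have habs : |((r:ℚ):ℝ) - ((r':ℚ):ℝ)| * (4*Q^2) ≥ 1 := by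
      have h4 : (0:ℝ) < 4*Q^2 := by positivity
      calc (1:ℝ) = (1/(4*Q^2)) * (4*Q^2) := by field_simp
        _ ≤ |((r:ℚ):ℝ) - ((r':ℚ):ℝ)| * (4*Q^2) := by
            exact mul_le_mul_of_nonneg_right hsp2 (le_of_lt h4)
    set x := (((r:ℚ):ℝ) - α + 2/(s:ℝ)^2) * (4*Q^2) with hx
    set z := (((r':ℚ):ℝ) - α + 2/(s:ℝ)^2) * (4*Q^2) with hz
    have h1 : x < (φ r : ℝ) + 1 := Int.lt_floor_add_one _
    have h2 : (φ r : ℝ) ≤ x := Int.floor_le _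
    have h3 : z < (φ r' : ℝ) + 1 := Int.lt_floor_add_one _
    have h4 : (φ r' : ℝ) ≤ z := Int.floor_le _
    have hφeq : ((φ r : ℤ) : ℝ) = ((φ r' : ℤ) : ℝ) := by exact_mod_cast congrArg (fun (t:ℤ) => (t:ℝ)) heq
    have hxz : |x - z| < 1 := by
      rw [abs_lt]
      constructor <;> linarith
    have hxz2 : x - z = (((r:ℚ):ℝ) - ((r':ℚ):ℝ)) * (4*Q^2) := by rw [hx, hz]; ring
    rw [hxz2, abs_mul, abs_of_pos (by positivity : (0:ℝ) < 4*Q^2)] at hxz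
    linarith
  have hTfin : T.Finite := by
    apply Set.Finite.of_finite_image _ hinjφ
    apply Set.Finite.subset (Finset.Icc (0:ℤ) N).finite_toSet
    rintro z ⟨r, hr, rfl⟩
    exact hmaps r hr
  have hupper : (T.ncard : ℝ) ≤ 17 * Q^2 / (s:ℝ)^2 := by
    have hle := Set.ncard_le_ncard_of_injOn φ
      (fun r hr => Finset.mem_coe.mpr (hmaps r hr)) hinjφ (Finset.Icc (0:ℤ) N).finite_toSet
    rw [Set.ncard_coe_finset, Int.card_Icc] at hle
    have hN0 : 0 ≤ N := by
      rw [hNdef]; apply Int.le_floor.mpr; push_cast; positivity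
    have hNle : (N:ℝ) ≤ 16*Q^2/(s:ℝ)^2 := Int.floor_le _
    have h1 : ((N + 1 - 0).toNat : ℝ) = (N:ℝ) + 1 := by
      have : (N + 1 - 0).toNat = N + 1 - 0 := Int.toNat_of_nonneg (by omega)
      rw [show ((N + 1 - 0).toNat : ℝ) = (((N + 1 - 0).toNat : ℤ) : ℝ) by push_cast; ring, this]
      push_cast; ring
    have h2 : (T.ncard : ℝ) ≤ ((N + 1 - 0).toNat : ℝ) := by exact_mod_cast hle
    have h3 : (1:ℝ) ≤ Q^2/(s:ℝ)^2 := by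
      rw [le_div_iff₀ (by positivity)]
      nlinarith
    calc (T.ncard : ℝ) ≤ (N:ℝ) + 1 := by rw [← h1]; exact h2
      _ ≤ 16*Q^2/(s:ℝ)^2 + 1 := by linarith
      _ ≤ 17 * Q^2 / (s:ℝ)^2 := by
          have : 16*Q^2/(s:ℝ)^2 + Q^2/(s:ℝ)^2 = 17*Q^2/(s:ℝ)^2 := by ring
          linarith
  -- ===================== lower bound ======================
  have hlower : (1/36 : ℝ) * Q^2 / (s:ℝ)^2 ≤ (T.ncard : ℝ) := by
    obtain ⟨x, y, hxy⟩ := Int.isCoprime_iff_gcd_eq_one.mpr hgcd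
    have hsZ : (0:ℤ) < (s:ℤ) := by exact_mod_cast hs
    set c : ℤ := x % (s:ℤ) with hcdef
    have hc0 : 0 ≤ c := Int.emod_nonneg x (ne_of_gt hsZ)
    have hcs : c < (s:ℤ) := Int.emod_lt_of_pos x hsZ
    have hdvd_uc : (s:ℤ) ∣ u * c - 1 := by
      refine ⟨-y - u*(x/(s:ℤ)), ?_⟩
      have hmod : c = x - (s:ℤ)*(x/(s:ℤ)) := by rw [hcdef, Int.emod_def]
      rw [hmod]
      linear_combination hxy
    set I : ℤ := ⌊(X-1)/6⌋ with hIdef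
    have hI0 : (0:ℤ) ≤ I := by
      rw [hIdef]
      apply Int.le_floor.mpr
      push_cast
      linarith
    have hIle : (I:ℝ) ≤ (X-1)/6 := by rw [hIdef]; exact Int.floor_le _
    have hIgt : (X-1)/6 - 1 < (I:ℝ) := by rw [hIdef]; linarith [Int.sub_one_lt_floor ((X-1)/6)]
    set M1 : ℤ → ℤ := fun i => ⌊(Q/2 - (c:ℝ)*(6*(i:ℝ)+1))/(s:ℝ)⌋ with hM1def
    set M2 : ℤ → ℤ := fun i => ⌊(Q - (c:ℝ)*(6*(i:ℝ)+1))/(s:ℝ)⌋ with hM2def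
    set dd : ℤ → ℤ → ℤ := fun i m => c*(6*i+1) + (s:ℤ)*m with hdddef
    set rr : ℤ → ℤ → ℚ := fun i m => ((u*(dd i m) - (6*i+1) : ℤ) : ℚ) / (((s:ℤ)*(dd i m) : ℤ) : ℚ) with hrrdef
    have hkX : ∀ i : ℤ, 0 ≤ i → i ≤ I → (1:ℝ) ≤ 6*(i:ℝ)+1 ∧ 6*(i:ℝ)+1 ≤ X := by
      intro i h0 hi
      have h0' : (0:ℝ) ≤ (i:ℝ) := by exact_mod_cast h0
      have hi' : (i:ℝ) ≤ (I:ℝ) := by exact_mod_cast hi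
      constructor
      · linarith
      · linarith
    have hckQ : ∀ i : ℤ, 0 ≤ i → i ≤ I → (0:ℝ) ≤ (c:ℝ)*(6*(i:ℝ)+1) ∧
        (c:ℝ)*(6*(i:ℝ)+1) + 1 ≤ Q/2 ∧ (s:ℝ)*(6*(i:ℝ)+1) ≤ Q/2 := by
      intro i h0 hi
      obtain ⟨hk1, hk2⟩ := hkX i h0 hi
      have hc0' : (0:ℝ) ≤ (c:ℝ) := by exact_mod_cast hc0
      have hcs' : (c:ℝ) + 1 ≤ (s:ℝ) := by
        have h : c + 1 ≤ (s:ℤ) := by omega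
        exact_mod_cast h
      have hsk : (s:ℝ)*(6*(i:ℝ)+1) ≤ Q/2 := by
        calc (s:ℝ)*(6*(i:ℝ)+1) ≤ (s:ℝ)*X := by nlinarith
          _ = Q/2 := by rw [hQeq]; ring
      refine ⟨by positivity, ?_, hsk⟩
      nlinarith [mul_le_mul_of_nonneg_right (by linarith : (c:ℝ) ≤ (s:ℝ)-1) (by linarith : (0:ℝ) ≤ 6*(i:ℝ)+1)]
    have hM12 : ∀ i : ℤ, 0 ≤ i → i ≤ I →
        (0:ℤ) ≤ M1 i ∧ M1 i ≤ M2 i ∧ (X - 1 : ℝ) ≤ ((M2 i : ℝ) - (M1 i:ℝ)) ∧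
        ((M2 i:ℝ) - (M1 i:ℝ)) ≤ X + 1 := by
      intro i h0 hi
      obtain ⟨hck0, hck1, hsk⟩ := hckQ i h0 hi
      have e1 : (M1 i : ℝ) ≤ (Q/2 - (c:ℝ)*(6*(i:ℝ)+1))/(s:ℝ) := by
        rw [hM1def]; exact Int.floor_le _
      have e2 : (Q/2 - (c:ℝ)*(6*(i:ℝ)+1))/(s:ℝ) - 1 < (M1 i : ℝ) := by
        rw [hM1def]; exact Int.sub_one_lt_floor _
      have e3 : (M2 i : ℝ) ≤ (Q - (c:ℝ)*(6*(i:ℝ)+1))/(s:ℝ) := by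
        rw [hM2def]; exact Int.floor_le _
      have e4 : (Q - (c:ℝ)*(6*(i:ℝ)+1))/(s:ℝ) - 1 < (M2 i : ℝ) := by
        rw [hM2def]; exact Int.sub_one_lt_floor _
      have ediff : (Q - (c:ℝ)*(6*(i:ℝ)+1))/(s:ℝ) - (Q/2 - (c:ℝ)*(6*(i:ℝ)+1))/(s:ℝ) = X := by
        rw [hQeq]; field_simp; ring
      have hM10 : (0:ℤ) ≤ M1 i := by
        rw [hM1def]; apply Int.le_floor.mpr; push_cast
        apply div_nonneg _ (le_of_lt hsp); linarith
      have h12 : M1 i ≤ M2 i := by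
        have hlt : (M1 i:ℝ) < (M2 i:ℝ) := by linarith
        have : M1 i < M2 i := by exact_mod_cast hlt
        omega
      exact ⟨hM10, h12, by linarith, by linarith⟩
    have hdfact : ∀ i m : ℤ, 0 ≤ i → i ≤ I → M1 i < m → m ≤ M2 i →
        1 ≤ m ∧ Q/2 < ((dd i m : ℤ):ℝ) ∧ ((dd i m : ℤ):ℝ) ≤ Q := by
      intro i m h0 hi hm1 hm2
      obtain ⟨hM10, h12, _, _⟩ := hM12 i h0 hi
      obtain ⟨hck0, hck1, hsk⟩ := hckQ i h0 hi
      have hddc : ((dd i m : ℤ):ℝ) = (c:ℝ)*(6*(i:ℝ)+1) + (s:ℝ)*(m:ℝ) := by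
        rw [hdddef]; push_cast; ring
      refine ⟨by omega, ?_, ?_⟩
      · have e2' : (Q/2 - (c:ℝ)*(6*(i:ℝ)+1))/(s:ℝ) < (M1 i : ℝ) + 1 := by
          rw [hM1def]; exact Int.lt_floor_add_one _
        have hm1' : (M1 i:ℝ) + 1 ≤ (m:ℝ) := by
          have : M1 i + 1 ≤ m := hm1
          exact_mod_cast this
        rw [hddc]
        have h := (div_lt_iff₀ hsp).mp (lt_of_lt_of_le e2' hm1')
        linarith
      · have e3 : (M2 i : ℝ) ≤ (Q - (c:ℝ)*(6*(i:ℝ)+1))/(s:ℝ) := by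
          rw [hM2def]; exact Int.floor_le _
        have hm2' : (m:ℝ) ≤ (M2 i:ℝ) := by exact_mod_cast hm2
        rw [hddc]
        have h := (le_div_iff₀ hsp).mp (le_trans hm2' e3)
        linarith
    have hmem : ∀ i m : ℤ, 0 ≤ i → i ≤ I → M1 i < m → m ≤ M2 i → rr i m ∈ T := by
      intro i m h0 hi hm1 hm2
      obtain ⟨hm1', hd1, hd2⟩ := hdfact i m h0 hi hm1 hm2
      obtain ⟨hk1, hk2⟩ := hkX i h0 hi
      obtain ⟨hck0, hck1, hsk⟩ := hckQ i h0 hi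
      have hdposR : (0:ℝ) < ((dd i m : ℤ):ℝ) := by linarith
      have hdpos : (0:ℤ) < dd i m := by exact_mod_cast hdposR
      have hdvdk : (s:ℤ) ∣ u*(dd i m) - (6*i+1) := by
        obtain ⟨w, hw⟩ := hdvd_uc
        refine ⟨w*(6*i+1) + u*m, ?_⟩
        simp only [hdddef]
        linear_combination (6*i+1) * hw
      obtain ⟨p, hp⟩ := hdvdk
      have hsd0 : ((s:ℤ)*(dd i m) : ℚ) ≠ 0 := by
        have : (0:ℤ) < (s:ℤ)*(dd i m) := mul_pos hsZ hdpos
        exact_mod_cast ne_of_gt this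
      rw [hTdef]
      refine ⟨⟨2*(dd i m), ?_, ?_, 2*p, ?_⟩, ?_⟩
      · push_cast; linarith
      · push_cast; linarith
      · simp only [hrrdef]
        have h2d0 : ((2*(dd i m) : ℤ) : ℚ) ≠ 0 := by
          have : (0:ℤ) < 2*(dd i m) := by omega
          exact_mod_cast ne_of_gt this
        rw [div_eq_div_iff (by exact_mod_cast hsd0) h2d0]
        have hZ : (u*(dd i m) - (6*i+1)) * (2*(dd i m)) = (2*p) * ((s:ℤ)*(dd i m)) := by
          linear_combination (2*(dd i m)) * hp
        exact_mod_cast hZ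
      · have hcast : ((rr i m : ℚ) : ℝ) =
            ((u:ℝ)*((dd i m:ℤ):ℝ) - (6*(i:ℝ)+1)) / ((s:ℝ)*((dd i m:ℤ):ℝ)) := by
          simp only [hrrdef]
          push_cast
          ring
        have hden : (0:ℝ) < (s:ℝ)*((dd i m:ℤ):ℝ) := mul_pos hsp hdposR
        have hdiff : (u:ℝ)/(s:ℝ) - ((rr i m : ℚ):ℝ) = (6*(i:ℝ)+1)/((s:ℝ)*((dd i m:ℤ):ℝ)) := by
          rw [hcast]
          field_simp
          ring
        have hb1 : (0:ℝ) ≤ (6*(i:ℝ)+1)/((s:ℝ)*((dd i m:ℤ):ℝ)) := by positivity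
        have hb2 : (6*(i:ℝ)+1)/((s:ℝ)*((dd i m:ℤ):ℝ)) ≤ 1/(s:ℝ)^2 := by
          rw [div_le_div_iff₀ hden (by positivity)]
          have hkd : (6*(i:ℝ)+1)*(s:ℝ) ≤ ((dd i m:ℤ):ℝ) := by nlinarith
          nlinarith [mul_le_mul_of_nonneg_right hkd (le_of_lt hsp)]
        have hsplit : (2:ℝ)/(s:ℝ)^2 = 1/(s:ℝ)^2 + 1/(s:ℝ)^2 := by ring
        rw [abs_le] at happ ⊢
        constructor
        · rw [hsplit]; linarith [happ.1]
        · rw [hsplit]; linarith [happ.2]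
    have hkey : ∀ i m i' m' : ℤ, 0 ≤ i → i ≤ I → M1 i < m → m ≤ M2 i →
        0 ≤ i' → i' ≤ I → M1 i' < m' → m' ≤ M2 i' →
        Int.gcd (6*i+1) m = 1 → Int.gcd (6*i'+1) m' = 1 →
        rr i m = rr i' m' → i = i' ∧ m = m' := by
      intro i m i' m' h0 hi hm1 hm2 h0' hi' hm1' hm2' hg hg' heq
      obtain ⟨hm1a, hd1a, hd2a⟩ := hdfact i m h0 hi hm1 hm2
      obtain ⟨hm1b, hd1b, hd2b⟩ := hdfact i' m' h0' hi' hm1' hm2'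
      have hdposR : (0:ℝ) < ((dd i m : ℤ):ℝ) := by linarith
      have hdposR' : (0:ℝ) < ((dd i' m' : ℤ):ℝ) := by linarith
      have hdpos : (0:ℤ) < dd i m := by exact_mod_cast hdposR
      have hdpos' : (0:ℤ) < dd i' m' := by exact_mod_cast hdposR'
      have hsd0 : (((s:ℤ)*(dd i m) : ℤ) : ℚ) ≠ 0 := by
        have : (0:ℤ) < (s:ℤ)*(dd i m) := mul_pos hsZ hdpos
        exact_mod_cast ne_of_gt this
      have hsd0' : (((s:ℤ)*(dd i' m') : ℤ) : ℚ) ≠ 0 := by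
        have : (0:ℤ) < (s:ℤ)*(dd i' m') := mul_pos hsZ hdpos'
        exact_mod_cast ne_of_gt this
      simp only [hrrdef] at heq
      rw [div_eq_div_iff hsd0 hsd0'] at heq
      have heqZ : (u*(dd i m) - (6*i+1)) * ((s:ℤ)*(dd i' m')) =
          (u*(dd i' m') - (6*i'+1)) * ((s:ℤ)*(dd i m)) := by exact_mod_cast heq
      have hkd : (6*i+1) * (dd i' m') = (6*i'+1) * (dd i m) := by
        have h2 : (s:ℤ) * ((6*i+1) * (dd i' m') - (6*i'+1) * (dd i m)) = 0 := by
          linear_combination -heqZ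
        rcases mul_eq_zero.mp h2 with h | h
        · exact absurd h (ne_of_gt hsZ)
        · linarith
      have hmm : (6*i+1) * m' = (6*i'+1) * m := by
        have h3 : (s:ℤ) * ((6*i+1) * m' - (6*i'+1) * m) = 0 := by
          simp only [hdddef] at hkd
          linear_combination hkd
        rcases mul_eq_zero.mp h3 with h | h
        · exact absurd h (ne_of_gt hsZ)
        · linarith
      have hcop : IsCoprime (6*i+1 : ℤ) m := Int.isCoprime_iff_gcd_eq_one.mpr hg
      have hcop' : IsCoprime (6*i'+1 : ℤ) m' := Int.isCoprime_iff_gcd_eq_one.mpr hg'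
      have hdvd1 : (6*i+1 : ℤ) ∣ (6*i'+1) := by
        apply hcop.dvd_of_dvd_mul_right
        exact ⟨m', hmm.symm⟩
      have hdvd2 : (6*i'+1 : ℤ) ∣ (6*i+1) := by
        apply hcop'.dvd_of_dvd_mul_right
        exact ⟨m, hmm⟩
      have hkk : (6*i+1 : ℤ) = 6*i'+1 := Int.dvd_antisymm (by omega) (by omega) hdvd1 hdvd2
      have hii : i = i' := by omega
      subst hii
      refine ⟨rfl, ?_⟩
      have hk0 : (6*i+1 : ℤ) ≠ 0 := by omega
      have := mul_left_cancel₀ hk0 hmm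
      omega
    set G : ℤ → Finset ℤ :=
      fun i => (Finset.Ioc (M1 i) (M2 i)).filter (fun m => Int.gcd (6*i+1) m = 1) with hGdef
    set bad : ℤ → Finset ℤ :=
      fun i => (Finset.Ioc (M1 i) (M2 i)).filter (fun m => ¬ Int.gcd (6*i+1) m = 1) with hbaddef
    set F : ℤ → Finset ℚ := fun i => (G i).image (fun m => rr i m) with hFdef
    set E : Finset ℚ := (Finset.Icc 0 I).biUnion F with hEdef
    have hmemG : ∀ i : ℤ, ∀ m ∈ G i, M1 i < m ∧ m ≤ M2 i ∧ Int.gcd (6*i+1) m = 1 := by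
      intro i m hm
      simp only [hGdef, Finset.mem_filter, Finset.mem_Ioc] at hm
      exact ⟨hm.1.1, hm.1.2, hm.2⟩
    have hET : ↑E ⊆ T := by
      intro z hz
      rw [Finset.mem_coe, hEdef, Finset.mem_biUnion] at hz
      obtain ⟨i, hi, hzF⟩ := hz
      rw [Finset.mem_Icc] at hi
      simp only [hFdef, Finset.mem_image] at hzF
      obtain ⟨m, hmG, rfl⟩ := hzF
      obtain ⟨h1, h2, h3⟩ := hmemG i m hmG
      exact hmem i m hi.1 hi.2 h1 h2
    have hdisj : ∀ i ∈ Finset.Icc (0:ℤ) I, ∀ j ∈ Finset.Icc (0:ℤ) I,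
        i ≠ j → Disjoint (F i) (F j) := by
      intro i hi j hj hij
      rw [Finset.mem_Icc] at hi hj
      rw [Finset.disjoint_left]
      intro z hzi hzj
      simp only [hFdef, Finset.mem_image] at hzi hzj
      obtain ⟨m, hmG, hz1⟩ := hzi
      obtain ⟨m', hmG', hz2⟩ := hzj
      obtain ⟨a1, a2, a3⟩ := hmemG i m hmG
      obtain ⟨b1, b2, b3⟩ := hmemG j m' hmG'
      exact hij (hkey i m j m' hi.1 hi.2 a1 a2 hj.1 hj.2 b1 b2 a3 b3 (hz1.trans hz2.symm)).1
    have hcardE : E.card = ∑ i ∈ Finset.Icc (0:ℤ) I, (F i).card := by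
      rw [hEdef]; exact Finset.card_biUnion hdisj
    have hFGcard : ∀ i ∈ Finset.Icc (0:ℤ) I, (F i).card = (G i).card := by
      intro i hi
      rw [Finset.mem_Icc] at hi
      rw [hFdef]
      apply Finset.card_image_of_injOn
      intro m hm m' hm' hrreq
      obtain ⟨a1, a2, a3⟩ := hmemG i m (Finset.mem_coe.mp hm)
      obtain ⟨b1, b2, b3⟩ := hmemG i m' (Finset.mem_coe.mp hm')
      exact (hkey i m i m' hi.1 hi.2 a1 a2 hi.1 hi.2 b1 b2 a3 b3 hrreq).2
    have hT1 : (E.card : ℝ) ≤ (T.ncard : ℝ) := by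
      have h := Set.ncard_le_ncard hET hTfin
      rw [Set.ncard_coe_finset] at h
      exact_mod_cast h
    -- counting
    set Kn : ℕ := ⌊X⌋₊ with hKndef
    have hKnX : (Kn:ℝ) ≤ X := Nat.floor_le (le_of_lt hXpos)
    set NS : Finset ℕ := Finset.Icc 5 Kn with hNSdef
    have hbadbound : ∀ i ∈ Finset.Icc (0:ℤ) I, ((bad i).card : ℝ) ≤
        ∑ n ∈ NS, (if ((n:ℤ) ∣ (6*i+1)) then ((X+1)/(n:ℝ) + 1) else 0) := by
      intro i hi
      rw [Finset.mem_Icc] at hi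
      obtain ⟨hM10, h12, hlen1, hlen2⟩ := hM12 i hi.1 hi.2
      have hsub : bad i ⊆ ((NS).filter (fun n : ℕ => (n:ℤ) ∣ (6*i+1))).biUnion
          (fun n => (Finset.Ioc (M1 i) (M2 i)).filter (fun m => (n:ℤ) ∣ m)) := by
        intro m hm
        simp only [hbaddef, Finset.mem_filter, Finset.mem_Ioc] at hm
        obtain ⟨⟨hma, hmb⟩, hmg⟩ := hm
        have hgd1 : ((Int.gcd (6*i+1) m : ℕ):ℤ) ∣ 6*i+1 := Int.gcd_dvd_left _ _
        have hgd2 : ((Int.gcd (6*i+1) m : ℕ):ℤ) ∣ m := Int.gcd_dvd_right _ _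
        have hk1 : (1:ℤ) ≤ 6*i+1 := by omega
        have hg0 : Int.gcd (6*i+1) m ≠ 0 := by
          intro h
          have := Int.gcd_eq_zero_iff.mp h
          omega
        have h2 : ¬(2 ∣ Int.gcd (6*i+1) m) := by
          intro h2
          have hh : (2:ℤ) ∣ 6*i+1 :=
            dvd_trans (by exact_mod_cast Int.natCast_dvd_natCast.mpr h2) hgd1
          omega
        have h3 : ¬(3 ∣ Int.gcd (6*i+1) m) := by
          intro h3
          have hh : (3:ℤ) ∣ 6*i+1 :=
            dvd_trans (by exact_mod_cast Int.natCast_dvd_natCast.mpr h3) hgd1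
          omega
        have hg5 : 5 ≤ Int.gcd (6*i+1) m := by omega
        have hgle : ((Int.gcd (6*i+1) m : ℕ):ℤ) ≤ 6*i+1 := Int.le_of_dvd (by omega) hgd1
        have hgKn : Int.gcd (6*i+1) m ≤ Kn := by
          have hkXr := (hkX i hi.1 hi.2).2
          apply Nat.le_floor
          calc ((Int.gcd (6*i+1) m : ℕ):ℝ) ≤ ((6*i+1 : ℤ):ℝ) := by exact_mod_cast hgle
            _ ≤ X := by push_cast; linarith
        rw [Finset.mem_biUnion]
        refine ⟨Int.gcd (6*i+1) m, ?_, ?_⟩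
        · refine Finset.mem_filter.mpr ⟨?_, hgd1⟩
          rw [hNSdef]
          exact Finset.mem_Icc.mpr ⟨hg5, hgKn⟩
        · exact Finset.mem_filter.mpr ⟨Finset.mem_Ioc.mpr ⟨hma, hmb⟩, hgd2⟩
      calc ((bad i).card : ℝ)
          ≤ ((((NS).filter (fun n : ℕ => (n:ℤ) ∣ (6*i+1))).biUnion
              (fun n => (Finset.Ioc (M1 i) (M2 i)).filter (fun m => (n:ℤ) ∣ m))).card : ℝ) := by
            exact_mod_cast Finset.card_le_card hsub
        _ ≤ ∑ n ∈ (NS).filter (fun n : ℕ => (n:ℤ) ∣ (6*i+1)),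
              (((Finset.Ioc (M1 i) (M2 i)).filter (fun m => (n:ℤ) ∣ m)).card : ℝ) := by
            exact_mod_cast Finset.card_biUnion_le
        _ ≤ ∑ n ∈ (NS).filter (fun n : ℕ => (n:ℤ) ∣ (6*i+1)), ((X+1)/(n:ℝ) + 1) := by
            apply Finset.sum_le_sum
            intro n hn
            simp only [hNSdef, Finset.mem_filter, Finset.mem_Icc] at hn
            have hn5 : 5 ≤ n := hn.1.1
            have hnpos : (0:ℤ) < (n:ℤ) := by
              have h0 : 0 < n := by omega
              exact_mod_cast h0
            have hcr := card_residue_Ioc (M1 i) (M2 i) 0 (n:ℤ) hnpos h12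
            simp only [sub_zero] at hcr
            have hnR : (0:ℝ) < (n:ℝ) := by exact_mod_cast hnpos
            calc (((Finset.Ioc (M1 i) (M2 i)).filter (fun m => (n:ℤ) ∣ m)).card : ℝ)
                ≤ ((M2 i:ℝ) - (M1 i:ℝ))/((n:ℤ):ℝ) + 1 := hcr
              _ ≤ (X+1)/(n:ℝ) + 1 := by
                  push_cast
                  gcongr
        _ = ∑ n ∈ NS, (if ((n:ℤ) ∣ (6*i+1)) then ((X+1)/(n:ℝ) + 1) else 0) := by
            rw [Finset.sum_filter]
    have hIcc0I : ((Finset.Icc (0:ℤ) I).card : ℝ) = (I:ℝ) + 1 := by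
      rw [Int.card_Icc]
      have h : ((I + 1 - 0).toNat : ℤ) = I + 1 := by
        rw [Int.toNat_of_nonneg (by omega)]; ring
      have h2 : (((I + 1 - 0).toNat : ℤ) : ℝ) = (I:ℝ) + 1 := by rw [h]; push_cast; ring
      exact_mod_cast h2
    have hbadtotal : ∑ i ∈ Finset.Icc (0:ℤ) I, ((bad i).card : ℝ) ≤
        ((I:ℝ)+1)*(X+1)*(1/4) + (((I:ℝ)+1)+(X+1))*(2*Real.sqrt X) + X := by
      have hs1' : ∑ i ∈ Finset.Icc (0:ℤ) I, ((bad i).card : ℝ) ≤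
          ∑ n ∈ NS, ∑ i ∈ Finset.Icc (0:ℤ) I,
            (if ((n:ℤ) ∣ (6*i+1)) then ((X+1)/(n:ℝ) + 1) else 0) := by
        rw [Finset.sum_comm]
        exact Finset.sum_le_sum hbadbound
      have hs2 : ∀ n ∈ NS,
          ∑ i ∈ Finset.Icc (0:ℤ) I, (if ((n:ℤ) ∣ (6*i+1)) then ((X+1)/(n:ℝ) + 1) else 0) ≤
          (((I:ℝ)+1)/(n:ℝ) + 1) * ((X+1)/(n:ℝ) + 1) := by
        intro n hn
        simp only [hNSdef, Finset.mem_Icc] at hn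
        have hnpos : (0:ℤ) < (n:ℤ) := by
          have h0 : 0 < n := by omega
          exact_mod_cast h0
        have hnR : (0:ℝ) < (n:ℝ) := by exact_mod_cast hnpos
        rw [← Finset.sum_filter, Finset.sum_const, nsmul_eq_mul]
        have hcount := card_dvd_6i1 I (n:ℤ) hnpos hI0
        have hfac : (0:ℝ) ≤ (X+1)/(n:ℝ) + 1 := by positivity
        apply mul_le_mul_of_nonneg_right _ hfac
        calc ((((Finset.Icc 0 I).filter (fun i => (n:ℤ) ∣ 6*i+1)).card) : ℝ)
            ≤ ((I:ℝ)+1)/((n:ℤ):ℝ) + 1 := hcount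
          _ = ((I:ℝ)+1)/(n:ℝ) + 1 := by push_cast; ring
      have hs3 : ∑ n ∈ NS, (((I:ℝ)+1)/(n:ℝ) + 1) * ((X+1)/(n:ℝ) + 1) ≤
          ((I:ℝ)+1)*(X+1)*(1/4) + (((I:ℝ)+1)+(X+1))*(2*Real.sqrt X) + X := by
        have hexp : ∀ n ∈ NS, (((I:ℝ)+1)/(n:ℝ) + 1) * ((X+1)/(n:ℝ) + 1) =
            ((I:ℝ)+1)*(X+1)*((1:ℝ)/(n:ℝ)^2) + (((I:ℝ)+1)+(X+1))*((1:ℝ)/(n:ℝ)) + 1 := by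
          intro n hn
          simp only [hNSdef, Finset.mem_Icc] at hn
          have hnR : (0:ℝ) < (n:ℝ) := by
            have : (5:ℕ) ≤ n := hn.1
            have : (0:ℕ) < n := by omega
            exact_mod_cast this
          field_simp
          ring
        rw [Finset.sum_congr rfl hexp]
        rw [Finset.sum_add_distrib, Finset.sum_add_distrib]
        have t1 : ∑ n ∈ NS, ((I:ℝ)+1)*(X+1)*((1:ℝ)/(n:ℝ)^2) ≤
            ((I:ℝ)+1)*(X+1)*(1/4) := by
          rw [← Finset.mul_sum, hNSdef]
          apply mul_le_mul_of_nonneg_left (sum_inv_sq_le Kn)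
          have : (0:ℝ) ≤ (I:ℝ) := by exact_mod_cast hI0
          positivity
        have t2 : ∑ n ∈ NS, (((I:ℝ)+1)+(X+1))*((1:ℝ)/(n:ℝ)) ≤
            (((I:ℝ)+1)+(X+1))*(2*Real.sqrt X) := by
          rw [← Finset.mul_sum]
          apply mul_le_mul_of_nonneg_left
          · calc ∑ n ∈ NS, (1:ℝ)/(n:ℝ)
                ≤ ∑ n ∈ Finset.Icc 1 Kn, (1:ℝ)/(n:ℝ) :=
                  Finset.sum_le_sum_of_subset_of_nonneg
                    (by rw [hNSdef]; exact Finset.Icc_subset_Icc (by norm_num) le_rfl)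
                    (fun n _ _ => by positivity)
              _ ≤ 2*Real.sqrt Kn := sum_inv_le_sqrt Kn
              _ ≤ 2*Real.sqrt X := by
                  have := Real.sqrt_le_sqrt hKnX
                  linarith
          · have : (0:ℝ) ≤ (I:ℝ) := by exact_mod_cast hI0
            positivity
        have t3 : ∑ n ∈ NS, (1:ℝ) ≤ X := by
          rw [Finset.sum_const, nsmul_eq_mul, mul_one]
          have hcard : NS.card ≤ Kn := by rw [hNSdef, Nat.card_Icc]; omega
          calc (NS.card : ℝ) ≤ (Kn:ℝ) := by exact_mod_cast hcard
            _ ≤ X := hKnX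
        linarith
      calc ∑ i ∈ Finset.Icc (0:ℤ) I, ((bad i).card : ℝ)
          ≤ ∑ n ∈ NS, ∑ i ∈ Finset.Icc (0:ℤ) I,
              (if ((n:ℤ) ∣ (6*i+1)) then ((X+1)/(n:ℝ) + 1) else 0) := hs1'
        _ ≤ ∑ n ∈ NS, (((I:ℝ)+1)/(n:ℝ) + 1) * ((X+1)/(n:ℝ) + 1) :=
            Finset.sum_le_sum hs2
        _ ≤ ((I:ℝ)+1)*(X+1)*(1/4) + (((I:ℝ)+1)+(X+1))*(2*Real.sqrt X) + X := hs3
    have hmainlow : ((I:ℝ)+1)*(X-1) ≤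
        ∑ i ∈ Finset.Icc (0:ℤ) I, (((Finset.Ioc (M1 i) (M2 i)).card) : ℝ) := by
      calc ((I:ℝ)+1)*(X-1) = ∑ _i ∈ Finset.Icc (0:ℤ) I, (X-1) := by
            rw [Finset.sum_const, nsmul_eq_mul, hIcc0I]
        _ ≤ ∑ i ∈ Finset.Icc (0:ℤ) I, (((Finset.Ioc (M1 i) (M2 i)).card) : ℝ) := by
            apply Finset.sum_le_sum
            intro i hi
            rw [Finset.mem_Icc] at hi
            obtain ⟨hM10, h12, hlen1, hlen2⟩ := hM12 i hi.1 hi.2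
            rw [Int.card_Ioc]
            have h : (((M2 i - M1 i).toNat : ℤ) : ℝ) = (M2 i:ℝ) - (M1 i:ℝ) := by
              rw [Int.toNat_of_nonneg (by omega)]
              push_cast; ring
            have h2 : (((M2 i - M1 i).toNat : ℕ) : ℝ) = (M2 i:ℝ) - (M1 i:ℝ) := by
              exact_mod_cast h
            rw [h2]
            linarith
    have hsplitcard : ∀ i ∈ Finset.Icc (0:ℤ) I, ((G i).card : ℝ) =
        (((Finset.Ioc (M1 i) (M2 i)).card) : ℝ) - ((bad i).card : ℝ) := by
      intro i hi
      have h := Finset.card_filter_add_card_filter_not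
        (s := Finset.Ioc (M1 i) (M2 i)) (p := fun m => Int.gcd (6*i+1) m = 1)
      have h' : (G i).card + (bad i).card = (Finset.Ioc (M1 i) (M2 i)).card := by
        simp only [hGdef, hbaddef]
        exact h
      have : ((G i).card : ℝ) + ((bad i).card : ℝ) = (((Finset.Ioc (M1 i) (M2 i)).card) : ℝ) := by
        exact_mod_cast h'
      linarith
    have hElow : ((I:ℝ)+1)*(X-1) -
        (((I:ℝ)+1)*(X+1)*(1/4) + (((I:ℝ)+1)+(X+1))*(2*Real.sqrt X) + X) ≤ (E.card : ℝ) := by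
      have h1 : (E.card : ℝ) = ∑ i ∈ Finset.Icc (0:ℤ) I, ((G i).card : ℝ) := by
        rw [hcardE]
        rw [Finset.sum_congr rfl hFGcard]
        push_cast
        rfl
      rw [h1, Finset.sum_congr rfl hsplitcard, Finset.sum_sub_distrib]
      have := hbadtotal
      have := hmainlow
      linarith
    -- final numeric computation
    set yv := Real.sqrt X with hyv
    have hy2 : yv^2 = X := Real.sq_sqrt (le_of_lt hXpos)
    have hy0 : (0:ℝ) ≤ yv := Real.sqrt_nonneg _
    have hy700 : 700 ≤ yv := by nlinarith
    have hQX2 : (1/36 : ℝ) * Q^2 / (s:ℝ)^2 = X^2/9 := by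
      rw [hQeq]
      field_simp
      ring
    rw [hQX2]
    have hJ1 : (X-1)/6 ≤ (I:ℝ)+1 := by linarith
    have hJ2 : (I:ℝ)+1 ≤ (X-1)/6 + 1 := by linarith
    have hfinal : X^2/9 ≤ ((I:ℝ)+1)*(X-1) -
        (((I:ℝ)+1)*(X+1)*(1/4) + (((I:ℝ)+1)+(X+1))*(2*Real.sqrt X) + X) := by
      rw [← hyv]
      set J := (I:ℝ)+1 with hJ
      have hcoef : (0:ℝ) ≤ (3*X - 5)/4 - 2*yv := by nlinarith
      nlinarith [mul_nonneg (sub_nonneg.mpr hJ1) hcoef, sq_nonneg yv, sq_nonneg (yv - 700),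
        mul_nonneg hy0 (sub_nonneg.mpr hy700)]
    linarith [hT1, hElow, hfinal]
  exact ⟨hlower, hupper⟩
end

section
/- There is an absolute constant C such that for every integer q ≥ 1, every real α and every real y > 0, one has |#{a ∈ ℤ : gcd(a, q) = 1 and |α − a/q| ≤ 1/(6y)} − φ(q)/(3y)| ≤ C · 2^(ω(q)), where ω(q) denotes the number of distinct prime factors of q and φ is Euler's totient function. -/
open Finset

open ArithmeticFunction ArithmeticFunction.Moebius ArithmeticFunction.zeta in
lemma aux_sum_moebius (g : ℕ) (hg : 0 < g) :
    ∑ d ∈ g.divisors, μ d = if g = 1 then 1 else 0 := by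
  have h := congrArg (fun f : ArithmeticFunction ℤ => f g) moebius_mul_coe_zeta
  simp only [mul_apply, one_apply, natCoe_apply] at h
  rw [← h, Nat.sum_divisorsAntidiagonal (fun d e => μ d * ((ζ e : ℕ) : ℤ))]
  refine Finset.sum_congr rfl fun d hd => ?_
  have hd' := Nat.mem_divisors.mp hd
  have h2 : g / d ≠ 0 := by
    intro h0
    have h3 := Nat.div_mul_cancel hd'.1
    rw [h0, zero_mul] at h3
    exact hg.ne' h3.symm
  simp [zeta_apply, h2]

open ArithmeticFunction ArithmeticFunction.Moebius ArithmeticFunction.zeta in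
lemma aux_totient_eq (q : ℕ) (hq : 0 < q) :
    (q.totient : ℤ) = ∑ d ∈ q.divisors, μ d * ((q / d : ℕ) : ℤ) := by
  have key : ∀ n : ℕ, n > 0 → ∑ i ∈ n.divisors, ((i.totient : ℤ)) = (n : ℤ) := by
    intro n _
    exact_mod_cast congrArg (Nat.cast : ℕ → ℤ) (Nat.sum_totient n)
  have h := (sum_eq_iff_sum_mul_moebius_eq.mp key) q hq
  simp only [Int.cast_id] at h
  rw [Nat.sum_divisorsAntidiagonal (fun d e => (μ d : ℤ) * (e : ℤ))] at h
  exact h.symm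

lemma aux_sqfree_card (q : ℕ) (hq : q ≠ 0) :
    (q.divisors.filter Squarefree).card = 2 ^ q.primeFactors.card := by
  have h := Nat.sum_divisors_filter_squarefree hq (f := fun _ => (1:ℕ))
  simp only [Finset.sum_const, smul_eq_mul, mul_one] at h
  rw [h, Finset.card_powerset]
  congr 1
  rw [Nat.factors_eq]
  rfl

lemma aux_filter_dvd_eq (d m n : ℤ) (hd : 0 < d) :
    (Finset.Icc m n).filter (fun a => d ∣ a) =
      (Finset.Icc (-((-m) / d)) (n / d)).image (fun k => d * k) := by
  ext a
  simp only [mem_filter, mem_Icc, mem_image]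
  constructor
  · rintro ⟨⟨h1, h2⟩, k, rfl⟩
    refine ⟨k, ⟨?_, ?_⟩, rfl⟩
    · rw [neg_le, Int.le_ediv_iff_mul_le hd]
      linarith [mul_comm d k]
    · rw [Int.le_ediv_iff_mul_le hd]
      linarith [mul_comm d k]
  · rintro ⟨k, ⟨h1, h2⟩, rfl⟩
    rw [neg_le, Int.le_ediv_iff_mul_le hd] at h1
    rw [Int.le_ediv_iff_mul_le hd] at h2
    exact ⟨⟨by linarith [mul_comm d k], by linarith [mul_comm d k]⟩, k, rfl⟩

lemma aux_card_dvd (d m n : ℤ) (hd : 0 < d) :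
    (((Finset.Icc m n).filter (fun a => d ∣ a)).card : ℤ) =
      max (n / d + 1 - (-((-m) / d))) 0 := by
  rw [aux_filter_dvd_eq d m n hd,
    Finset.card_image_of_injective _ (mul_right_injective₀ hd.ne'), Int.card_Icc]
  rw [Int.toNat_eq_max]

lemma aux_count_near (d : ℤ) (hd : 0 < d) (u v : ℝ) (huv : u ≤ v) :
    |((((Finset.Icc ⌈u⌉ ⌊v⌋).filter (fun a => d ∣ a)).card : ℝ)) - (v - u) / d| ≤ 1 := by
  set m : ℤ := ⌈u⌉
  set n : ℤ := ⌊v⌋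
  set f : ℤ := n / d
  set c : ℤ := -((-m) / d)
  have hcard : (((Finset.Icc m n).filter (fun a => d ∣ a)).card : ℤ) = max (f + 1 - c) 0 :=
    aux_card_dvd d m n hd
  have hDpos : (0:ℝ) < (d:ℝ) := by exact_mod_cast hd
  have hD1 : (1:ℝ) ≤ (d:ℝ) := by exact_mod_cast hd
  have hf1 : f * d ≤ n := (Int.le_ediv_iff_mul_le hd).mp le_rfl
  have hf2 : n < (f + 1) * d := Int.lt_ediv_add_one_mul_self n hd
  have hc1 : ((-m) / d) * d ≤ -m := (Int.le_ediv_iff_mul_le hd).mp le_rfl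
  have hc2 : -m < ((-m) / d + 1) * d := Int.lt_ediv_add_one_mul_self (-m) hd
  have hF1 : (f:ℝ) * d ≤ v := le_trans (by exact_mod_cast hf1) (Int.floor_le v)
  have hF2 : v < ((f:ℝ) + 1) * d := by
    have hv : v < (n:ℝ) + 1 := Int.lt_floor_add_one v
    have : ((n:ℝ) + 1) ≤ ((f:ℝ) + 1) * d := by
      have : (n + 1 : ℤ) ≤ (f + 1) * d := hf2
      exact_mod_cast this
    linarith
  have hC1 : u ≤ (c:ℝ) * d := by
    have : (m:ℝ) ≤ (c:ℝ) * d := by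
      have : m ≤ c * d := by
        simp only [c]
        nlinarith [hc1]
      exact_mod_cast this
    linarith [Int.le_ceil u]
  have hC2 : ((c:ℝ) - 1) * d < u := by
    have hint : (c - 1) * d ≤ m - 1 := by
      have : (c - 1) * d < m := by simp only [c]; nlinarith [hc2]
      omega
    have h4 : ((c:ℝ) - 1) * d ≤ (m:ℝ) - 1 := by exact_mod_cast hint
    have hm : (m:ℝ) < u + 1 := by exact_mod_cast Int.ceil_lt_add_one u
    linarith
  have hcardR : (((Finset.Icc m n).filter (fun a => d ∣ a)).card : ℝ)
      = max ((f:ℝ) + 1 - c) 0 := by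
    have h2 : ((((Finset.Icc m n).filter (fun a => d ∣ a)).card : ℤ) : ℝ)
        = ((max (f + 1 - c) 0 : ℤ) : ℝ) := by exact_mod_cast hcard
    push_cast at h2
    convert h2 using 2
  rw [hcardR, abs_le]
  constructor
  · have : (v - u) / d ≤ (f:ℝ) + 2 - c := by
      rw [div_le_iff₀ hDpos]; nlinarith
    have hle := le_max_left ((f:ℝ) + 1 - c) 0
    linarith
  · have h1 : (f:ℝ) + 1 - c ≤ (v - u) / d + 1 := by
      have : (f:ℝ) - c ≤ (v - u) / d := by
        rw [le_div_iff₀ hDpos]; nlinarith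
      linarith
    have h2 : (0:ℝ) ≤ (v - u) / d + 1 := by
      have := div_nonneg (by linarith : (0:ℝ) ≤ v - u) hDpos.le
      linarith
    have := max_le h1 h2
    linarith [this]

open ArithmeticFunction ArithmeticFunction.Moebius ArithmeticFunction.zeta in
lemma aux_count_identity (q : ℕ) (hq : 1 ≤ q) (m n : ℤ) :
    ((((Finset.Icc m n).filter fun a => Int.gcd a q = 1).card : ℤ)) =
      ∑ d ∈ q.divisors, μ d * (((Finset.Icc m n).filter (fun a => ((d:ℕ):ℤ) ∣ a)).card : ℤ) := by
  have hgcd_pos : ∀ a : ℤ, 0 < Int.gcd a q := fun a =>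
    Nat.pos_of_ne_zero fun h => by
      rw [Int.gcd_eq_zero_iff] at h
      have := h.2; simp at this; omega
  have hdiv : ∀ a : ℤ, (Int.gcd a q).divisors = q.divisors.filter (fun d : ℕ => (d:ℤ) ∣ a) := by
    intro a
    ext d
    simp only [Nat.mem_divisors, Finset.mem_filter]
    constructor
    · rintro ⟨hdg, _⟩
      have h1 : (d:ℤ) ∣ a := (Int.natCast_dvd_natCast.mpr hdg).trans (Int.gcd_dvd_left _ _)
      have h2 : d ∣ q := by
        have := (Int.natCast_dvd_natCast.mpr hdg).trans (Int.gcd_dvd_right _ _)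
        exact_mod_cast this
      exact ⟨⟨h2, by omega⟩, h1⟩
    · rintro ⟨⟨hdq, hq0⟩, hda⟩
      refine ⟨?_, (hgcd_pos a).ne'⟩
      have := Int.dvd_gcd hda (Int.natCast_dvd_natCast.mpr hdq)
      exact_mod_cast this
  calc ((((Finset.Icc m n).filter fun a => Int.gcd a q = 1).card : ℤ))
      = ∑ a ∈ Finset.Icc m n, (if Int.gcd a q = 1 then (1:ℤ) else 0) := by
        rw [Finset.sum_boole]
    _ = ∑ a ∈ Finset.Icc m n, ∑ d ∈ q.divisors, (if (d:ℤ) ∣ a then μ d else 0) := by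
        refine Finset.sum_congr rfl fun a _ => ?_
        rw [← Finset.sum_filter, ← hdiv a, aux_sum_moebius _ (hgcd_pos a)]
    _ = ∑ d ∈ q.divisors, ∑ a ∈ Finset.Icc m n, (if (d:ℤ) ∣ a then μ d else 0) :=
        Finset.sum_comm
    _ = ∑ d ∈ q.divisors, μ d * (((Finset.Icc m n).filter (fun a => ((d:ℕ):ℤ) ∣ a)).card : ℤ) := by
        refine Finset.sum_congr rfl fun d _ => ?_
        rw [← Finset.sum_filter, Finset.sum_const, nsmul_eq_mul, mul_comm]

open ArithmeticFunction ArithmeticFunction.Moebius ArithmeticFunction.zeta in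
/-- **Lemma (counting coprime numerators near `α`).** There is an absolute `C > 0` such that
for every `q ≥ 1`, every real `α` and every `y > 0`,
`|#{a ∈ ℤ : gcd(a,q) = 1, |α - a/q| ≤ 1/(6y)} - φ(q)/(3y)| ≤ C · 2^(ω(q))`. -/
theorem count_coprime_numerators_in_interval :
    ∃ C : ℝ, 0 < C ∧ ∀ q : ℕ, 1 ≤ q → ∀ α y : ℝ, 0 < y →
      |({a : ℤ | Int.gcd a q = 1 ∧ |α - (a : ℝ) / q| ≤ 1 / (6 * y)}.ncard : ℝ) -
          (q.totient : ℝ) / (3 * y)| ≤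
        C * 2 ^ q.primeFactors.card := by
  refine ⟨1, one_pos, ?_⟩
  intro q hq α y hy
  have hq0 : (0:ℝ) < q := by exact_mod_cast hq
  have h6 : (0:ℝ) < 6 * y := by linarith
  have h3y : (0:ℝ) < 3 * y := by linarith
  set u : ℝ := q * α - q / (6 * y) with hu
  set v : ℝ := q * α + q / (6 * y) with hv
  have huv : u ≤ v := by
    have : (0:ℝ) ≤ (q:ℝ)/(6*y) := by positivity
    rw [hu, hv]; linarith
  have hmem : ∀ a : ℤ, (|α - (a:ℝ)/q| ≤ 1/(6*y)) ↔ (⌈u⌉ ≤ a ∧ a ≤ ⌊v⌋) := by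
    intro a
    have e1 : (q:ℝ) * (α - a/q) = q*α - a := by field_simp
    have key : |α - (a:ℝ)/q| ≤ 1/(6*y) ↔ |(q:ℝ)*α - (a:ℝ)| ≤ (q:ℝ)/(6*y) := by
      rw [← e1, abs_mul, abs_of_pos hq0,
        show (q:ℝ)/(6*y) = q * (1/(6*y)) by ring]
      exact (mul_le_mul_iff_right₀ hq0).symm
    rw [key, abs_le, Int.ceil_le, Int.le_floor, hu, hv]
    constructor
    · rintro ⟨h1, h2⟩; exact ⟨by linarith, by linarith⟩
    · rintro ⟨h1, h2⟩; exact ⟨by linarith, by linarith⟩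
  have hset : {a : ℤ | Int.gcd a q = 1 ∧ |α - (a:ℝ)/q| ≤ 1/(6*y)}
      = ↑((Finset.Icc ⌈u⌉ ⌊v⌋).filter fun a => Int.gcd a q = 1) := by
    ext a
    simp only [Set.mem_setOf_eq, Finset.coe_filter, Finset.mem_Icc]
    rw [hmem a]
    tauto
  rw [hset, Set.ncard_coe_finset]
  have hid := aux_count_identity q hq ⌈u⌉ ⌊v⌋
  have hNr : ((((Finset.Icc ⌈u⌉ ⌊v⌋).filter fun a => Int.gcd a q = 1).card : ℝ))
      = ∑ d ∈ q.divisors,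
          (μ d : ℝ) * (((Finset.Icc ⌈u⌉ ⌊v⌋).filter (fun a => ((d:ℕ):ℤ) ∣ a)).card : ℝ) := by
    exact_mod_cast congrArg (Int.cast : ℤ → ℝ) hid
  have hvu : v - u = (q:ℝ)/(3*y) := by
    rw [hu, hv]
    field_simp
    ring
  have hphi : (q.totient : ℝ) / (3*y) = ∑ d ∈ q.divisors, (μ d : ℝ) * ((v - u)/(d:ℝ)) := by
    have h1 : (q.totient : ℝ) = ∑ d ∈ q.divisors, (μ d : ℝ) * ((q / d : ℕ) : ℝ) := by
      have h0 := congrArg (fun z : ℤ => (z : ℝ)) (aux_totient_eq q hq)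
      push_cast at h0
      exact h0
    rw [h1, Finset.sum_div]
    refine Finset.sum_congr rfl fun d hd => ?_
    have hd' := Nat.mem_divisors.mp hd
    have hdn0 : d ≠ 0 := by
      rintro rfl
      exact hd'.2 (Nat.eq_zero_of_zero_dvd hd'.1)
    have hd0 : (0:ℝ) < (d:ℝ) := by exact_mod_cast Nat.pos_of_ne_zero hdn0
    have hcast : ((q / d : ℕ) : ℝ) = (q:ℝ)/(d:ℝ) := Nat.cast_div hd'.1 hd0.ne'
    rw [hcast, hvu, mul_div_assoc, div_div, div_div, mul_comm (d:ℝ) (3*y)]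
  rw [hNr, hphi, ← Finset.sum_sub_distrib]
  have hterm : ∀ d ∈ q.divisors,
      |(μ d : ℝ) * (((Finset.Icc ⌈u⌉ ⌊v⌋).filter (fun a => ((d:ℕ):ℤ) ∣ a)).card : ℝ)
        - (μ d : ℝ) * ((v - u)/(d:ℝ))| ≤ if Squarefree d then (1:ℝ) else 0 := by
    intro d hd
    have hd' := Nat.mem_divisors.mp hd
    have hdn0 : d ≠ 0 := by
      rintro rfl
      exact hd'.2 (Nat.eq_zero_of_zero_dvd hd'.1)
    have hdZ : (0:ℤ) < (d:ℤ) := by exact_mod_cast Nat.pos_of_ne_zero hdn0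
    have hnear := aux_count_near ((d:ℕ):ℤ) hdZ u v huv
    have hcastd : (((d:ℕ):ℤ):ℝ) = (d:ℝ) := by push_cast; ring
    rw [hcastd] at hnear
    rw [← mul_sub, abs_mul]
    have habs : |(μ d : ℝ)| = if Squarefree d then (1:ℝ) else 0 := by
      have := abs_moebius (n := d)
      rcases eq_or_ne (|μ d|) 1 with h | h
      · rw [show |(μ d : ℝ)| = ((|μ d| : ℤ) : ℝ) by push_cast; ring, this]
        split <;> simp
      · rw [show |(μ d : ℝ)| = ((|μ d| : ℤ) : ℝ) by push_cast; ring, this]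
        split <;> simp
    rw [habs]
    split
    · calc (1:ℝ) * _ ≤ 1 * 1 := by
            rw [one_mul, one_mul]; exact hnear
        _ = 1 := by ring
    · simp
  calc |∑ d ∈ q.divisors,
        ((μ d : ℝ) * (((Finset.Icc ⌈u⌉ ⌊v⌋).filter (fun a => ((d:ℕ):ℤ) ∣ a)).card : ℝ)
          - (μ d : ℝ) * ((v - u)/(d:ℝ)))|
      ≤ ∑ d ∈ q.divisors,
        |(μ d : ℝ) * (((Finset.Icc ⌈u⌉ ⌊v⌋).filter (fun a => ((d:ℕ):ℤ) ∣ a)).card : ℝ)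
          - (μ d : ℝ) * ((v - u)/(d:ℝ))| := Finset.abs_sum_le_sum_abs _ _
    _ ≤ ∑ d ∈ q.divisors, (if Squarefree d then (1:ℝ) else 0) := Finset.sum_le_sum hterm
    _ = ((q.divisors.filter Squarefree).card : ℝ) := by rw [Finset.sum_boole]
    _ ≤ 1 * 2 ^ q.primeFactors.card := by
        rw [aux_sqfree_card q (by omega), one_mul]
        push_cast
        exact le_rfl
end
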